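/- arXiv:1205.5085 — 4 statements merged into one kernel-verified Lean document; each statement's English description precedes it below -/
import Mathlib

section
/- For all f, g ∈ Δ, the maximal domain of the Jacobi expression ℓ[·] in L²((-1,1); (1-x²)^{-1}dx), Green's formula holds with vanishing boundary terms: ∫_{-1}^{1} ℓ[f](x)·ḡ(x)·(1-x²)^{-1}dx = ∫_{-1}^{1} f(x)·\overline{ℓ[g](x)}·(1-x²)^{-1}dx. That is, the maximal operator A given by Af = ℓ[f] on the domain Δ is symmetric in L²((-1,1); (1-x²)^{-1}dx). -/
open MeasureTheory Set

/-- Membership in the maximal domain `Δ` of the Jacobi expression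
`ℓ[y](x) = -(1-x²)y''(x) + k·y(x)` in `L²((-1,1); (1-x²)⁻¹ dx)`. -/
def InJacobiMaxDomain (k : ℝ) (f f' f'' : ℝ → ℂ) : Prop :=
  (∀ x ∈ Ioo (-1 : ℝ) 1, ∀ y ∈ Ioo (-1 : ℝ) 1, IntervalIntegrable f' volume x y) ∧
  (∀ x ∈ Ioo (-1 : ℝ) 1, ∀ y ∈ Ioo (-1 : ℝ) 1, IntervalIntegrable f'' volume x y) ∧
  (∀ x ∈ Ioo (-1 : ℝ) 1, ∀ y ∈ Ioo (-1 : ℝ) 1, f y - f x = ∫ t in x..y, f' t) ∧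
  (∀ x ∈ Ioo (-1 : ℝ) 1, ∀ y ∈ Ioo (-1 : ℝ) 1, f' y - f' x = ∫ t in x..y, f'' t) ∧
  IntegrableOn (fun x => ‖f x‖ ^ 2 * (1 - x ^ 2)⁻¹) (Ioo (-1 : ℝ) 1) ∧
  IntegrableOn
    (fun x => ‖-((1 - x ^ 2 : ℝ) : ℂ) * f'' x + (k : ℂ) * f x‖ ^ 2 * (1 - x ^ 2)⁻¹)
    (Ioo (-1 : ℝ) 1)

open Filter Topology

structure Nice (u u' u'' : ℝ → ℂ) : Prop where
  int1 : ∀ x ∈ Ioo (-1 : ℝ) 1, ∀ y ∈ Ioo (-1 : ℝ) 1, IntervalIntegrable u' volume x y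
  int2 : ∀ x ∈ Ioo (-1 : ℝ) 1, ∀ y ∈ Ioo (-1 : ℝ) 1, IntervalIntegrable u'' volume x y
  ftc1 : ∀ x ∈ Ioo (-1 : ℝ) 1, ∀ y ∈ Ioo (-1 : ℝ) 1, u y - u x = ∫ t in x..y, u' t
  ftc2 : ∀ x ∈ Ioo (-1 : ℝ) 1, ∀ y ∈ Ioo (-1 : ℝ) 1, u' y - u' x = ∫ t in x..y, u'' t
  l2 : IntegrableOn (fun x => ‖u x‖ ^ 2 * (1 - x ^ 2)⁻¹) (Ioo (-1 : ℝ) 1)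
  l2'' : IntegrableOn (fun x => ‖u'' x‖ ^ 2 * (1 - x ^ 2)) (Ioo (-1 : ℝ) 1)

lemma union_Ioc : (⋃ n : ℕ, Ioc ((1 : ℝ)/(n+1) - 1) (1 - 1/(n+1))) = Ioo (-1 : ℝ) 1 := by
  ext x
  simp only [mem_iUnion, mem_Ioc, mem_Ioo]
  constructor
  · rintro ⟨n, h1, h2⟩
    have hp : (0:ℝ) < 1/(n+1) := by positivity
    constructor <;> nlinarith
  · rintro ⟨h1, h2⟩
    obtain ⟨n, hn⟩ := exists_nat_one_div_lt (show (0:ℝ) < min (1 - x) (1 + x) by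
      simp [lt_min_iff]; constructor <;> linarith)
    refine ⟨n, ?_, ?_⟩
    · have := hn.trans_le (min_le_right _ _); linarith
    · have := hn.trans_le (min_le_left _ _); linarith

lemma asm_of_locint {w : ℝ → ℂ}
    (hint : ∀ x ∈ Ioo (-1 : ℝ) 1, ∀ y ∈ Ioo (-1 : ℝ) 1, IntervalIntegrable w volume x y) :
    AEStronglyMeasurable w (volume.restrict (Ioo (-1 : ℝ) 1)) := by
  rw [← union_Ioc, aestronglyMeasurable_iUnion_iff]
  intro n
  have hp : (0:ℝ) < 1/(n+1) := by positivity
  have hle : (1:ℝ)/(n+1) ≤ 1 := by rw [div_le_one (by positivity)]; simp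
  have hm1 : ((1 : ℝ)/(n+1) - 1) ∈ Ioo (-1 : ℝ) 1 := ⟨by linarith, by linarith⟩
  have hm2 : (1 - (1 : ℝ)/(n+1)) ∈ Ioo (-1 : ℝ) 1 := ⟨by linarith, by linarith⟩
  exact ((intervalIntegrable_iff_integrableOn_Ioc_of_le (by linarith)).mp
    (hint _ hm1 _ hm2)).aestronglyMeasurable

lemma nice_of_mem {k : ℝ} {f f' f'' : ℝ → ℂ} (hf : InJacobiMaxDomain k f f' f'') :
    Nice f f' f'' := by
  obtain ⟨h1, h2, h3, h4, h5, h6⟩ := hf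
  set φ : ℝ → ℂ := fun x => -((1 - x ^ 2 : ℝ) : ℂ) * f'' x + (k : ℂ) * f x with hφdef
  refine ⟨h1, h2, h3, h4, h5, ?_⟩
  have hasm : AEStronglyMeasurable f'' (volume.restrict (Ioo (-1:ℝ) 1)) := asm_of_locint h2
  have hasmF : AEStronglyMeasurable (fun x => ‖f'' x‖ ^ 2 * (1 - x ^ 2))
      (volume.restrict (Ioo (-1:ℝ) 1)) := by
    have := (hasm.norm.mul hasm.norm).mul
      ((continuous_const.sub (continuous_pow 2)).aestronglyMeasurable :
        AEStronglyMeasurable (fun x : ℝ => 1 - x ^ 2) (volume.restrict (Ioo (-1:ℝ) 1)))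
    exact this.congr (Filter.Eventually.of_forall fun x => by
      simp only [Pi.mul_apply, Pi.sub_apply]; ring)
  have hg : Integrable
      (fun x => 2 * k ^ 2 * (‖f x‖ ^ 2 * (1 - x ^ 2)⁻¹) + 2 * (‖φ x‖ ^ 2 * (1 - x ^ 2)⁻¹))
      (volume.restrict (Ioo (-1:ℝ) 1)) :=
    (h5.const_mul _).add (h6.const_mul _)
  refine Integrable.mono' hg hasmF ?_
  rw [ae_restrict_iff' measurableSet_Ioo]
  refine Filter.Eventually.of_forall fun x hx => ?_
  have hc : 0 < 1 - x ^ 2 := by nlinarith [hx.1, hx.2]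
  have hM : (k:ℂ) * f x - φ x = ((1 - x ^ 2 : ℝ) : ℂ) * f'' x := by
    simp only [hφdef]; ring
  have hn : ‖(k:ℂ) * f x - φ x‖ = (1 - x ^ 2) * ‖f'' x‖ := by
    rw [hM, norm_mul, Complex.norm_real, Real.norm_eq_abs, abs_of_pos hc]
  have hb : ‖(k:ℂ) * f x - φ x‖ ≤ |k| * ‖f x‖ + ‖φ x‖ := by
    refine (norm_sub_le _ _).trans ?_
    rw [norm_mul, Complex.norm_real, Real.norm_eq_abs]
  have hsq : ((1 - x ^ 2) * ‖f'' x‖) ^ 2 ≤ 2 * k ^ 2 * ‖f x‖ ^ 2 + 2 * ‖φ x‖ ^ 2 := by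
    rw [← hn]
    nlinarith [sq_nonneg (|k| * ‖f x‖ - ‖φ x‖), sq_abs k, norm_nonneg ((k:ℂ) * f x - φ x),
      sq_nonneg (‖(k:ℂ) * f x - φ x‖)]
  have hval : ‖f'' x‖ ^ 2 * (1 - x ^ 2) = ((1 - x ^ 2) * ‖f'' x‖) ^ 2 * (1 - x ^ 2)⁻¹ := by
    field_simp
  rw [Real.norm_eq_abs, abs_of_nonneg (by positivity), hval]
  have hi : (0:ℝ) ≤ (1 - x ^ 2)⁻¹ := (inv_pos.mpr hc).le
  calc ((1 - x ^ 2) * ‖f'' x‖) ^ 2 * (1 - x ^ 2)⁻¹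
      ≤ (2 * k ^ 2 * ‖f x‖ ^ 2 + 2 * ‖φ x‖ ^ 2) * (1 - x ^ 2)⁻¹ := by
        exact mul_le_mul_of_nonneg_right hsq hi
    _ = 2 * k ^ 2 * (‖f x‖ ^ 2 * (1 - x ^ 2)⁻¹) + 2 * (‖φ x‖ ^ 2 * (1 - x ^ 2)⁻¹) := by ring

lemma integrable_star {α : Type*} [MeasurableSpace α] {μ : Measure α} {h : α → ℂ}
    (hh : Integrable h μ) : Integrable (fun x => star (h x)) μ :=
  hh.mono (continuous_star.comp_aestronglyMeasurable hh.aestronglyMeasurable)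
    (Filter.Eventually.of_forall fun x => by simp)

lemma intervalIntegrable_star {h : ℝ → ℂ} {a b : ℝ} (hh : IntervalIntegrable h volume a b) :
    IntervalIntegrable (fun x => star (h x)) volume a b :=
  ⟨integrable_star hh.1, integrable_star hh.2⟩

lemma intervalIntegral_star (h : ℝ → ℂ) (a b : ℝ) :
    ∫ t in a..b, star (h t) = star (∫ t in a..b, h t) := by
  rw [intervalIntegral, intervalIntegral]
  have e1 : ∫ t in Ioc a b, star (h t) = star (∫ t in Ioc a b, h t) := integral_conj
  have e2 : ∫ t in Ioc b a, star (h t) = star (∫ t in Ioc b a, h t) := integral_conj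
  rw [e1, e2, star_sub]

lemma nice_star {u u' u'' : ℝ → ℂ} (h : Nice u u' u'') :
    Nice (fun x => star (u x)) (fun x => star (u' x)) (fun x => star (u'' x)) := by
  refine ⟨fun x hx y hy => intervalIntegrable_star (h.int1 x hx y hy),
          fun x hx y hy => intervalIntegrable_star (h.int2 x hx y hy),
          fun x hx y hy => ?_, fun x hx y hy => ?_, ?_, ?_⟩
  · rw [intervalIntegral_star, ← star_sub, ← h.ftc1 x hx y hy]
  · rw [intervalIntegral_star, ← star_sub, ← h.ftc2 x hx y hy]
  · simpa only [norm_star] using h.l2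
  · simpa only [norm_star] using h.l2''

lemma neg_mem_Ioo {x : ℝ} (hx : x ∈ Ioo (-1 : ℝ) 1) : -x ∈ Ioo (-1 : ℝ) 1 :=
  ⟨by linarith [hx.2], by linarith [hx.1]⟩

lemma neg_preimage_Ioo : (fun x : ℝ => -x) ⁻¹' Ioo (-1 : ℝ) 1 = Ioo (-1 : ℝ) 1 := by
  ext z
  simp only [mem_preimage, mem_Ioo]
  constructor <;> rintro ⟨a, b⟩ <;> constructor <;> linarith

lemma integrableOn_comp_neg {g : ℝ → ℝ}
    (hg : IntegrableOn g (Ioo (-1 : ℝ) 1)) :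
    IntegrableOn (fun x => g (-x)) (Ioo (-1 : ℝ) 1) := by
  have key := (MeasurePreserving.integrableOn_comp_preimage
    (Measure.measurePreserving_neg (volume : Measure ℝ))
    (Homeomorph.neg ℝ).measurableEmbedding (s := Ioo (-1 : ℝ) 1) (f := g)).2 hg
  have : (Neg.neg ⁻¹' Ioo (-1 : ℝ) 1 : Set ℝ) = Ioo (-1 : ℝ) 1 := neg_preimage_Ioo
  rw [this] at key
  exact key

lemma nice_neg {u u' u'' : ℝ → ℂ} (h : Nice u u' u'') :
    Nice (fun x => u (-x)) (fun x => -u' (-x)) (fun x => u'' (-x)) := by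
  refine ⟨?_, ?_, ?_, ?_, ?_, ?_⟩
  · intro x hx y hy
    have := ((IntervalIntegrable.iff_comp_neg).mp (h.int1 _ (neg_mem_Ioo hx) _ (neg_mem_Ioo hy)))
    rw [neg_neg, neg_neg] at this
    exact this.neg
  · intro x hx y hy
    have := ((IntervalIntegrable.iff_comp_neg).mp (h.int2 _ (neg_mem_Ioo hx) _ (neg_mem_Ioo hy)))
    rw [neg_neg, neg_neg] at this
    exact this
  · intro x hx y hy
    rw [intervalIntegral.integral_neg, intervalIntegral.integral_comp_neg,
      ← intervalIntegral.integral_symm, ← h.ftc1 _ (neg_mem_Ioo hx) _ (neg_mem_Ioo hy)]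
  · intro x hx y hy
    rw [intervalIntegral.integral_comp_neg, intervalIntegral.integral_symm,
      ← h.ftc2 _ (neg_mem_Ioo hx) _ (neg_mem_Ioo hy)]
    ring
  · have := integrableOn_comp_neg (g := fun x => ‖u x‖ ^ 2 * (1 - x ^ 2)⁻¹) h.l2
    exact this.congr_fun (fun x _ => by simp) measurableSet_Ioo
  · have := integrableOn_comp_neg (g := fun x => ‖u'' x‖ ^ 2 * (1 - x ^ 2)) h.l2''
    exact this.congr_fun (fun x _ => by simp) measurableSet_Ioo

lemma my_ibp {a b : ℝ} (hab : a ≤ b) (p p' q q' : ℝ → ℂ)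
    (hp' : IntegrableOn p' (Ioc a b)) (hq' : IntegrableOn q' (Ioc a b))
    (hp : ∀ y ∈ Icc a b, p y = p a + ∫ t in a..y, p' t)
    (hq : ∀ y ∈ Icc a b, q y = q a + ∫ t in a..y, q' t) :
    (∫ x in Ioc a b, p' x * q x) + (∫ x in Ioc a b, p x * q' x) = p b * q b - p a * q a := by
  have hmema : a ∈ Icc a b := ⟨le_refl a, hab⟩
  have hmemb : b ∈ Icc a b := ⟨hab, le_refl b⟩
  have hp'Icc : IntegrableOn p' (Icc a b) := (integrableOn_Icc_iff_integrableOn_Ioc).mpr hp'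
  have hq'Icc : IntegrableOn q' (Icc a b) := (integrableOn_Icc_iff_integrableOn_Ioc).mpr hq'
  -- continuity of p and q on [a,b]
  have hprim : ContinuousOn (fun y => p a + ∫ t in a..y, p' t) (Icc a b) := by
    apply continuousOn_const.add
    have := intervalIntegral.continuousOn_primitive_interval (μ := volume) (a := a) (b := b)
      (f := p') (by rwa [uIcc_of_le hab])
    rwa [uIcc_of_le hab] at this
  have hpc : ContinuousOn p (Icc a b) := hprim.congr hp
  have hqrim : ContinuousOn (fun y => q a + ∫ t in a..y, q' t) (Icc a b) := by
    apply continuousOn_const.add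
    have := intervalIntegral.continuousOn_primitive_interval (μ := volume) (a := a) (b := b)
      (f := q') (by rwa [uIcc_of_le hab])
    rwa [uIcc_of_le hab] at this
  have hqc : ContinuousOn q (Icc a b) := hqrim.congr hq
  -- integrability of products
  have hp'q : IntegrableOn (fun x => p' x * q x) (Ioc a b) :=
    (hp'Icc.mul_continuousOn hqc isCompact_Icc).mono_set Ioc_subset_Icc_self
  have hpq' : IntegrableOn (fun x => p x * q' x) (Ioc a b) :=
    (IntegrableOn.continuousOn_mul hpc hq'Icc isCompact_Icc).mono_set Ioc_subset_Icc_self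
  -- interval integrals of p' over subintervals
  have hIIp' : ∀ c ∈ Icc a b, ∀ d ∈ Icc a b, c ≤ d → IntervalIntegrable p' volume c d := by
    intro c hc d hd hcd
    rw [intervalIntegrable_iff_integrableOn_Ioc_of_le hcd]
    exact hp'.mono_set (Ioc_subset_Ioc hc.1 hd.2)
  have hIIq' : ∀ c ∈ Icc a b, ∀ d ∈ Icc a b, c ≤ d → IntervalIntegrable q' volume c d := by
    intro c hc d hd hcd
    rw [intervalIntegrable_iff_integrableOn_Ioc_of_le hcd]
    exact hq'.mono_set (Ioc_subset_Ioc hc.1 hd.2)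
  -- the Fubini kernel
  set F : ℝ → ℝ → ℂ := fun x t => if t ≤ x then p' x * q' t else 0 with hFdef
  have hFuncurry : Function.uncurry F =
      Set.indicator {z : ℝ × ℝ | z.2 ≤ z.1} (fun z => p' z.1 * q' z.2) := by
    funext z
    by_cases hz : z.2 ≤ z.1
    · simp [Function.uncurry, hFdef, hz, Set.indicator_of_mem, Set.mem_setOf_eq]
    · simp [Function.uncurry, hFdef, hz, Set.indicator_of_notMem, Set.mem_setOf_eq]
  have hFint : Integrable (Function.uncurry F)
      ((volume.restrict (Ioc a b)).prod (volume.restrict (Ioc a b))) := by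
    rw [hFuncurry]
    exact (hp'.mul_prod hq').indicator (measurableSet_le measurable_snd measurable_fst)
  have hswap := MeasureTheory.integral_integral_swap hFint
  -- evaluate the left side of hswap
  have hL : (∫ x in Ioc a b, ∫ t in Ioc a b, F x t) =
      ∫ x in Ioc a b, p' x * (q x - q a) := by
    refine setIntegral_congr_fun measurableSet_Ioc fun x hx => ?_
    have h1 : (fun t => F x t) = fun t => (Iic x).indicator (fun t => p' x * q' t) t := by
      funext t
      by_cases ht : t ≤ x
      · simp [hFdef, ht, Set.indicator_of_mem, Set.mem_Iic]
      · simp [hFdef, ht, Set.indicator_of_notMem, Set.mem_Iic]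
    rw [h1, setIntegral_indicator measurableSet_Iic]
    have h2 : Ioc a b ∩ Iic x = Ioc a x := by
      ext t
      simp only [mem_inter_iff, mem_Ioc, mem_Iic]
      exact ⟨fun ⟨⟨h3, _⟩, h5⟩ => ⟨h3, h5⟩, fun ⟨h3, h5⟩ => ⟨⟨h3, h5.trans hx.2⟩, h5⟩⟩
    rw [h2, integral_const_mul]
    have h3 : ∫ t in Ioc a x, q' t = q x - q a := by
      have := hq x (Ioc_subset_Icc_self hx)
      rw [intervalIntegral.integral_of_le hx.1.le] at this
      rw [this]; ring
    rw [h3]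
  -- evaluate the right side of hswap
  have hR : (∫ t in Ioc a b, ∫ x in Ioc a b, F x t) =
      ∫ t in Ioc a b, (p b - p t) * q' t := by
    refine setIntegral_congr_fun measurableSet_Ioc fun t ht => ?_
    have h1 : (fun x => F x t) = fun x => (Ici t).indicator (fun x => p' x * q' t) x := by
      funext x
      by_cases hxt : t ≤ x
      · simp [hFdef, hxt, Set.indicator_of_mem, Set.mem_Ici]
      · simp [hFdef, hxt, Set.indicator_of_notMem, Set.mem_Ici]
    rw [h1, setIntegral_indicator measurableSet_Ici]
    have h2 : Ioc a b ∩ Ici t = Icc t b := by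
      ext x
      simp only [mem_inter_iff, mem_Ioc, mem_Ici, mem_Icc]
      exact ⟨fun ⟨⟨_, h4⟩, h5⟩ => ⟨h5, h4⟩, fun ⟨h5, h4⟩ => ⟨⟨ht.1.trans_le h5, h4⟩, h5⟩⟩
    rw [h2, integral_mul_const, integral_Icc_eq_integral_Ioc]
    have h3 : ∫ x in Ioc t b, p' x = p b - p t := by
      have hb' := hp b hmemb
      have ht' := hp t (Ioc_subset_Icc_self ht)
      have hadd := intervalIntegral.integral_add_adjacent_intervals
        (hIIp' a hmema t (Ioc_subset_Icc_self ht) ht.1.le)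
        (hIIp' t (Ioc_subset_Icc_self ht) b hmemb ht.2)
      rw [← intervalIntegral.integral_of_le ht.2]
      rw [hb', ht']
      rw [intervalIntegral.integral_of_le ht.1.le, intervalIntegral.integral_of_le hab] at hadd ⊢
      rw [← hadd]; ring
    rw [h3]
  rw [hL, hR] at hswap
  -- expand both sides
  have hp'int : ∫ x in Ioc a b, p' x = p b - p a := by
    have := hp b hmemb
    rw [intervalIntegral.integral_of_le hab] at this
    rw [this]; ring
  have hq'int : ∫ x in Ioc a b, q' x = q b - q a := by
    have := hq b hmemb
    rw [intervalIntegral.integral_of_le hab] at this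
    rw [this]; ring
  have hLexp : (∫ x in Ioc a b, p' x * (q x - q a)) =
      (∫ x in Ioc a b, p' x * q x) - (p b - p a) * q a := by
    have : (fun x => p' x * (q x - q a)) = fun x => p' x * q x - p' x * q a := by
      funext x; ring
    rw [this, integral_sub hp'q (hp'.mul_const _), integral_mul_const, hp'int]
  have hRexp : (∫ t in Ioc a b, (p b - p t) * q' t) =
      p b * (q b - q a) - (∫ t in Ioc a b, p t * q' t) := by
    have : (fun t => (p b - p t) * q' t) = fun t => p b * q' t - p t * q' t := by
      funext t; ring
    rw [this, integral_sub (hq'.const_mul _) hpq', integral_const_mul, hq'int]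
  rw [hLexp, hRexp] at hswap
  linear_combination hswap

lemma amgm_aux (A B c : ℝ) (hc : 0 < c) : A * B ≤ (A^2 * c⁻¹ + B^2 * c) / 2 := by
  have h1 : 0 ≤ (A - B * c)^2 * c⁻¹ := mul_nonneg (sq_nonneg _) (inv_pos.mpr hc).le
  have h2 : c * c⁻¹ = 1 := mul_inv_cancel₀ hc.ne'
  nlinarith [h1, h2, sq_nonneg (A - B * c)]

lemma contOn_of_ftc {p w : ℝ → ℂ}
    (hint : ∀ x ∈ Ioo (-1 : ℝ) 1, ∀ y ∈ Ioo (-1 : ℝ) 1, IntervalIntegrable w volume x y)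
    (hftc : ∀ x ∈ Ioo (-1 : ℝ) 1, ∀ y ∈ Ioo (-1 : ℝ) 1, p y - p x = ∫ t in x..y, w t) :
    ContinuousOn p (Ioo (-1 : ℝ) 1) := by
  intro y₀ hy₀
  obtain ⟨hy₁, hy₂⟩ := hy₀
  set a : ℝ := (y₀ - 1) / 2 with ha
  set b : ℝ := (y₀ + 1) / 2 with hb
  have haI : a ∈ Ioo (-1 : ℝ) 1 := ⟨by simp [ha]; linarith, by simp [ha]; linarith⟩
  have hbI : b ∈ Ioo (-1 : ℝ) 1 := ⟨by simp [hb]; linarith, by simp [hb]; linarith⟩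
  have hsub : Ioo a b ⊆ Ioo (-1 : ℝ) 1 := Ioo_subset_Ioo haI.1.le hbI.2.le
  have hmem : y₀ ∈ Ioo a b := ⟨by simp [ha]; linarith, by simp [hb]; linarith⟩
  have hcont : ContinuousOn (fun y => ∫ t in a..y, w t) (uIcc a b) :=
    intervalIntegral.continuousOn_primitive_interval' (hint _ haI _ hbI) left_mem_uIcc
  have hIcc : uIcc a b = Icc a b := uIcc_of_le (by simp [ha, hb]; linarith)
  have hCA : ContinuousAt (fun y => p a + ∫ t in a..y, w t) y₀ := by
    apply ContinuousAt.add continuousAt_const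
    exact hcont.continuousAt (by rw [hIcc]; exact Icc_mem_nhds hmem.1 hmem.2)
  have heq : p =ᶠ[nhds y₀] fun y => p a + ∫ t in a..y, w t := by
    filter_upwards [Ioo_mem_nhds hmem.1 hmem.2] with y hy
    have := hftc a haI y (hsub hy)
    linear_combination this
  exact (hCA.congr heq.symm).continuousWithinAt

lemma deriv_bound {u u' u'' : ℝ → ℂ} (h : Nice u u' u'') :
    ∃ D : ℝ, 0 ≤ D ∧ ∀ t ∈ Ico (0:ℝ) 1, ‖u' t‖ ≤ D * (1 - t) ^ (-(1/4) : ℝ) := by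
  set I : ℝ := ∫ x in Ioo (-1:ℝ) 1, ‖u'' x‖ ^ 2 * (1 - x ^ 2) with hIdef
  have hI : 0 ≤ I := setIntegral_nonneg measurableSet_Ioo fun x hx =>
    mul_nonneg (sq_nonneg _) (by nlinarith [hx.1, hx.2])
  refine ⟨‖u' 0‖ + I / 2 + 2, by positivity, ?_⟩
  intro t ht
  have h0 : (0:ℝ) ∈ Ioo (-1:ℝ) 1 := by norm_num
  have htI : t ∈ Ioo (-1:ℝ) 1 := ⟨by linarith [ht.1], ht.2⟩
  have ht1 : 0 < 1 - t := by linarith [ht.2]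
  have hsubIoc : Ioc (0:ℝ) t ⊆ Ioo (-1:ℝ) 1 := fun s hs =>
    ⟨by linarith [hs.1], lt_of_le_of_lt hs.2 ht.2⟩
  -- FTC for u'
  have hftc := h.ftc2 0 h0 t htI
  -- pointwise bound on [0, t]
  have hpt : ∀ s ∈ Icc (0:ℝ) t, ‖u'' s‖ ≤
      (‖u'' s‖ ^ 2 * (1 - s ^ 2) + (1 - s) ^ (-(5/4) : ℝ)) / 2 := by
    intro s hs
    have hs1 : 0 < 1 - s := by
      have := hs.2; linarith [ht.2]
    have hc : (0:ℝ) < (1 - s) ^ (-(5/4) : ℝ) := Real.rpow_pos_of_pos hs1 _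
    have := amgm_aux ‖u'' s‖ 1 ((1 - s) ^ (-(5/4) : ℝ)) hc
    rw [mul_one, one_pow, one_mul] at this
    refine this.trans ?_
    have hinv : ((1 - s) ^ (-(5/4) : ℝ))⁻¹ = (1 - s) ^ ((5/4) : ℝ) := by
      rw [← Real.rpow_neg hs1.le]; norm_num
    have hle : (1 - s) ^ ((5/4) : ℝ) ≤ 1 - s ^ 2 := by
      have h1 : (1 - s) ^ ((5/4) : ℝ) ≤ (1 - s) ^ ((1:ℝ)) := by
        apply Real.rpow_le_rpow_of_exponent_ge hs1 (by linarith [hs.1, ht.2]) (by norm_num)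
      rw [Real.rpow_one] at h1
      nlinarith [hs.1, hs.2, ht.2]
    have hsq : (0:ℝ) ≤ ‖u'' s‖ ^ 2 := sq_nonneg _
    rw [hinv]
    have := mul_le_mul_of_nonneg_left hle hsq
    linarith
  -- integrabilities on [0, t]
  have hII1 : IntervalIntegrable (fun s => ‖u'' s‖) volume 0 t := (h.int2 _ h0 _ htI).norm
  have hII2 : IntervalIntegrable (fun s => ‖u'' s‖ ^ 2 * (1 - s ^ 2)) volume 0 t := by
    rw [intervalIntegrable_iff_integrableOn_Ioc_of_le ht.1]
    exact h.l2''.mono_set hsubIoc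
  have hII3 : IntervalIntegrable (fun s => (1 - s) ^ (-(5/4) : ℝ)) volume 0 t := by
    apply ContinuousOn.intervalIntegrable
    apply ContinuousOn.rpow_const (Continuous.continuousOn (by continuity))
    intro s hs
    rw [uIcc_of_le ht.1] at hs
    left
    have : s ≤ t := hs.2
    intro hcontra
    have : (1:ℝ) - s = 0 := hcontra
    linarith [ht.2]
  have hII4 : IntervalIntegrable
      (fun s => (‖u'' s‖ ^ 2 * (1 - s ^ 2) + (1 - s) ^ (-(5/4) : ℝ)) / 2) volume 0 t :=
    (hII2.add hII3).div_const 2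
  -- integral bounds
  have hmono := intervalIntegral.integral_mono_on ht.1 hII1 hII4 hpt
  have hIb : ∫ s in (0:ℝ)..t, ‖u'' s‖ ^ 2 * (1 - s ^ 2) ≤ I := by
    rw [intervalIntegral.integral_of_le ht.1, hIdef]
    apply setIntegral_mono_set h.l2''
    · filter_upwards [ae_restrict_mem measurableSet_Ioo] with x hx
      simp only [Pi.zero_apply]
      exact mul_nonneg (sq_nonneg _) (by nlinarith [hx.1, hx.2])
    · exact HasSubset.Subset.eventuallyLE hsubIoc
  have hrb : ∫ s in (0:ℝ)..t, (1 - s) ^ (-(5/4) : ℝ) ≤ 4 * (1 - t) ^ (-(1/4) : ℝ) := by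
    have hderiv : ∀ s ∈ uIcc (0:ℝ) t,
        HasDerivAt (fun s : ℝ => 4 * (1 - s) ^ (-(1/4) : ℝ)) ((1 - s) ^ (-(5/4) : ℝ)) s := by
      intro s hs
      rw [uIcc_of_le ht.1] at hs
      have hs1 : 0 < 1 - s := by linarith [hs.2, ht.2]
      have h1 : HasDerivAt (fun s : ℝ => 1 - s) (-1) s := by
        simpa using (hasDerivAt_id s).const_sub 1
      have h2 := (Real.hasDerivAt_rpow_const (x := 1 - s) (p := -(1/4))
        (Or.inl hs1.ne')).comp s h1
      have h3 := h2.const_mul (4:ℝ)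
      have h4 : (4:ℝ) * (-(1/4) * (1 - s) ^ (-(1/4:ℝ) - 1) * -1) = (1 - s) ^ (-(5/4):ℝ) := by
        rw [show (-(1/4):ℝ) - 1 = -(5/4) by norm_num]
        ring
      rw [h4] at h3
      exact h3
    rw [intervalIntegral.integral_eq_sub_of_hasDerivAt hderiv hII3]
    have h4 : (0:ℝ) < 4 * (1 - 0) ^ (-(1/4) : ℝ) := by
      rw [sub_zero, Real.one_rpow]; norm_num
    simp only [sub_zero, Real.one_rpow, mul_one] at *
    linarith
  -- combine
  have hnorm : ‖u' t‖ ≤ ‖u' 0‖ + ∫ s in (0:ℝ)..t, ‖u'' s‖ := by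
    have : u' t = u' 0 + ∫ s in (0:ℝ)..t, u'' s := by linear_combination hftc
    rw [this]
    exact (norm_add_le _ _).trans (by
      gcongr
      exact intervalIntegral.norm_integral_le_integral_norm ht.1)
  have hsplit : ∫ s in (0:ℝ)..t, (‖u'' s‖ ^ 2 * (1 - s ^ 2) + (1 - s) ^ (-(5/4) : ℝ)) / 2
      = ((∫ s in (0:ℝ)..t, ‖u'' s‖ ^ 2 * (1 - s ^ 2)) +
         (∫ s in (0:ℝ)..t, (1 - s) ^ (-(5/4) : ℝ))) / 2 := by
    rw [← intervalIntegral.integral_add hII2 hII3, intervalIntegral.integral_div]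
  have hone : (1:ℝ) ≤ (1 - t) ^ (-(1/4) : ℝ) :=
    Real.one_le_rpow_of_pos_of_le_one_of_nonpos ht1 (by linarith [ht.1]) (by norm_num)
  calc ‖u' t‖ ≤ ‖u' 0‖ + ∫ s in (0:ℝ)..t, ‖u'' s‖ := hnorm
    _ ≤ ‖u' 0‖ + (I + 4 * (1 - t) ^ (-(1/4) : ℝ)) / 2 := by
        rw [hsplit] at hmono
        have := hmono
        linarith [hIb, hrb]
    _ ≤ (‖u' 0‖ + I / 2 + 2) * (1 - t) ^ (-(1/4) : ℝ) := by
        have hn : (0:ℝ) ≤ ‖u' 0‖ := norm_nonneg _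
        nlinarith [hone, hI, hn]

lemma integrableOn_one_sub_rpow (c : ℝ) (hc : c ∈ Ico (0:ℝ) 1) (r : ℝ) (hr : -1 < r) :
    IntervalIntegrable (fun t => (1 - t) ^ r) volume c 1 := by
  have h1 : IntervalIntegrable (fun s : ℝ => s ^ r) volume 0 (1 - c) :=
    intervalIntegral.intervalIntegrable_rpow' (a := 0) (b := 1 - c) hr
  have h2 := h1.comp_sub_left 1
  have h3 : (1:ℝ) - 0 = 1 := by norm_num
  have h4 : (1:ℝ) - (1 - c) = c := by ring
  rw [h3, h4] at h2
  exact h2.symm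

lemma u_bound {u u' u'' : ℝ → ℂ} (h : Nice u u' u'') :
    ∃ C : ℝ, 0 ≤ C ∧ ∀ y ∈ Ico (0:ℝ) 1, ‖u y‖ ≤ C * (1 - y) ^ ((3/4) : ℝ) := by
  obtain ⟨D, hD0, hD⟩ := deriv_bound h
  have hcont : ContinuousOn u' (Ioo (-1:ℝ) 1) := contOn_of_ftc h.int2 h.ftc2
  have hsub01 : Ioo (0:ℝ) 1 ⊆ Ioo (-1:ℝ) 1 := Ioo_subset_Ioo (by norm_num) le_rfl
  have hbndint : ∀ c ∈ Ico (0:ℝ) 1,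
      IntegrableOn (fun t => D * (1 - t) ^ (-(1/4):ℝ)) (Ioo c 1) := by
    intro c hc
    rw [← integrableOn_Ioc_iff_integrableOn_Ioo,
      ← intervalIntegrable_iff_integrableOn_Ioc_of_le hc.2.le]
    exact (integrableOn_one_sub_rpow c hc _ (by norm_num)).const_mul D
  have hu'int : IntegrableOn u' (Ioo (0:ℝ) 1) := by
    refine Integrable.mono' (hbndint 0 (by norm_num)) ?_ ?_
    · exact (hcont.mono hsub01).aestronglyMeasurable measurableSet_Ioo
    · filter_upwards [ae_restrict_mem measurableSet_Ioo] with t htm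
      exact hD t ⟨htm.1.le, htm.2⟩
  have hprim : ∀ c ∈ Ico (0:ℝ) 1, Tendsto (fun z => ∫ t in Ioc c z, u' t)
      (nhdsWithin 1 (Iio 1)) (nhds (∫ t in Ioc c 1, u' t)) := by
    intro c hc
    have hint : IntegrableOn u' (Icc c 1) := by
      rw [integrableOn_Icc_iff_integrableOn_Ioo]
      exact hu'int.mono_set (Ioo_subset_Ioo hc.1 le_rfl)
    have hcp := intervalIntegral.continuousOn_primitive (a := c) (b := 1) (f := u') hint
    have hcw : ContinuousWithinAt (fun z => ∫ t in Ioc c z, u' t) (Icc c 1) 1 :=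
      hcp 1 ⟨hc.2.le, le_rfl⟩
    have heq : nhdsWithin (1:ℝ) (Ioo c 1) = nhdsWithin 1 (Iio 1) :=
      nhdsWithin_Ioo_eq_nhdsLT hc.2
    rw [ContinuousWithinAt] at hcw
    exact hcw.mono_left (le_trans (le_of_eq heq.symm) (nhdsWithin_mono _ Ioo_subset_Icc_self))
  have h0I : (0:ℝ) ∈ Ioo (-1:ℝ) 1 := by norm_num
  have htendL : Tendsto u (nhdsWithin 1 (Iio 1))
      (nhds (u 0 + ∫ t in Ioc (0:ℝ) 1, u' t)) := by
    have h1 := (hprim 0 (by norm_num)).const_add (u 0)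
    refine Tendsto.congr' ?_ h1
    filter_upwards [Ioo_mem_nhdsLT_of_mem (show (1:ℝ) ∈ Ioc (0:ℝ) 1 by norm_num)] with z hz
    have := h.ftc1 0 h0I z (hsub01 hz)
    rw [intervalIntegral.integral_of_le hz.1.le] at this
    linear_combination -this
  have hL0 : u 0 + ∫ t in Ioc (0:ℝ) 1, u' t = 0 := by
    by_contra hL
    set L := u 0 + ∫ t in Ioc (0:ℝ) 1, u' t with hLdef
    have hLpos : 0 < ‖L‖ := norm_pos_iff.mpr hL
    have hev : ∀ᶠ y in nhdsWithin (1:ℝ) (Iio 1), ‖L‖/2 < ‖u y‖ :=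
      (htendL.norm).eventually_const_lt (by linarith)
    have hev2 : ∀ᶠ y in nhdsWithin (1:ℝ) (Iio 1), y ∈ Ioo (0:ℝ) 1 :=
      Ioo_mem_nhdsLT_of_mem (show (1:ℝ) ∈ Ioc (0:ℝ) 1 by norm_num)
    obtain ⟨c, hc1, hc2⟩ := mem_nhdsLT_iff_exists_Ioo_subset.mp (hev.and hev2)
    set c' := max c 0 with hc'def
    have hc'1 : c' < 1 := max_lt hc1 one_pos
    have hsubc : Ioo c' 1 ⊆ Ioo c 1 := Ioo_subset_Ioo (le_max_left _ _) le_rfl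
    have hKint : IntegrableOn (fun y => 8/‖L‖^2 * (‖u y‖^2 * (1 - y^2)⁻¹)) (Ioo c' 1) := by
      refine Integrable.const_mul ?_ _
      refine h.l2.mono_set fun y hy => ?_
      exact ⟨by linarith [(le_max_right c 0).trans_lt hy.1], hy.2⟩
    have hinvint : IntegrableOn (fun y => (1 - y)⁻¹) (Ioo c' 1) := by
      refine Integrable.mono' hKint ?_ ?_
      · refine ContinuousOn.aestronglyMeasurable ?_ measurableSet_Ioo
        intro y hy
        refine ContinuousAt.continuousWithinAt ?_
        apply ContinuousAt.inv₀ (by fun_prop)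
        intro hzero
        have : (1:ℝ) - y = 0 := hzero
        linarith [hy.2]
      · filter_upwards [ae_restrict_mem measurableSet_Ioo] with y hy
        have hyc := hc2 (hsubc hy)
        have hy0 : 0 < y := (le_max_right c 0).trans_lt hy.1
        have hy1 : 0 < 1 - y := by linarith [hy.2]
        have hy2 : 0 < 1 - y^2 := by nlinarith [hy.2]
        have hbig : ‖L‖/2 < ‖u y‖ := hyc.1
        have h1y : (1:ℝ) - y^2 ≤ 2 * (1 - y) := by nlinarith
        rw [Real.norm_eq_abs, abs_of_pos (inv_pos.mpr hy1)]
        have step1 : (1 - y)⁻¹ ≤ 2 / (1 - y^2) := by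
          rw [inv_eq_one_div, div_le_div_iff₀ hy1 hy2]
          linarith
        have step2 : (2:ℝ) ≤ 8 * ‖u y‖^2 / ‖L‖^2 := by
          rw [le_div_iff₀ (by positivity)]
          nlinarith [hbig, hLpos, norm_nonneg (u y)]
        calc (1 - y)⁻¹ ≤ 2 / (1 - y^2) := step1
          _ = 2 * (1 - y^2)⁻¹ := by rw [div_eq_mul_inv]
          _ ≤ (8 * ‖u y‖^2 / ‖L‖^2) * (1 - y^2)⁻¹ :=
              mul_le_mul_of_nonneg_right step2 (inv_pos.mpr hy2).le
          _ = 8/‖L‖^2 * (‖u y‖^2 * (1 - y^2)⁻¹) := by ring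
    have hII : IntervalIntegrable (fun y => (1 - y)⁻¹) volume c' 1 := by
      rw [intervalIntegrable_iff_integrableOn_Ioo_of_le hc'1.le]
      exact hinvint
    have hII2 := hII.comp_sub_left 1
    have hfeq : (fun x : ℝ => (1 - (1 - x))⁻¹) = fun x : ℝ => x⁻¹ := by
      funext x; norm_num
    rw [hfeq] at hII2
    have h10 : (1:ℝ) - 1 = 0 := by norm_num
    rw [h10] at hII2
    rcases intervalIntegrable_inv_iff.mp hII2.symm with heq | hnot
    · have : c' = 1 := by linarith
      exact hc'1.ne this
    · exact hnot left_mem_uIcc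
  -- final bound
  refine ⟨4 * D / 3, by positivity, ?_⟩
  intro y hy
  have hy1 : y < 1 := hy.2
  have hyI : y ∈ Ioo (-1:ℝ) 1 := ⟨by linarith [hy.1], hy1⟩
  have huy : u y = - ∫ t in Ioc y 1, u' t := by
    have t1 : Tendsto (fun z => u y + ∫ t in Ioc y z, u' t) (nhdsWithin 1 (Iio 1))
        (nhds (u y + ∫ t in Ioc y 1, u' t)) := (hprim y hy).const_add (u y)
    have t2 : Tendsto u (nhdsWithin 1 (Iio 1)) (nhds 0) := by
      rw [← hL0]; exact htendL
    have heq' : (fun z => u y + ∫ t in Ioc y z, u' t) =ᶠ[nhdsWithin (1:ℝ) (Iio 1)] u := by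
      filter_upwards [Ioo_mem_nhdsLT_of_mem (show (1:ℝ) ∈ Ioc y 1 from ⟨hy1, le_rfl⟩)]
        with z hz
      have hzI : z ∈ Ioo (-1:ℝ) 1 := ⟨by linarith [hy.1, hz.1], hz.2⟩
      have := h.ftc1 y hyI z hzI
      rw [intervalIntegral.integral_of_le hz.1.le] at this
      linear_combination -this
    have := tendsto_nhds_unique (t1.congr' heq') t2
    linear_combination this
  have hIntnorm : IntegrableOn (fun t => ‖u' t‖) (Ioo y 1) :=
    (hu'int.mono_set (Ioo_subset_Ioo hy.1 le_rfl)).norm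
  have hnormint : ‖u y‖ ≤ ∫ t in Ioc y 1, ‖u' t‖ := by
    rw [huy, norm_neg]
    exact norm_integral_le_integral_norm _
  have hmono2 : ∫ t in Ioc y 1, ‖u' t‖ ≤ ∫ t in Ioc y 1, D * (1 - t) ^ (-(1/4):ℝ) := by
    rw [integral_Ioc_eq_integral_Ioo, integral_Ioc_eq_integral_Ioo]
    refine setIntegral_mono_on hIntnorm (hbndint y hy) measurableSet_Ioo fun t ht => ?_
    exact hD t ⟨by linarith [hy.1, ht.1], ht.2⟩
  have hcalc : ∫ t in Ioc y 1, D * (1 - t) ^ (-(1/4):ℝ)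
      = D * ((1 - y) ^ ((3/4):ℝ) / (3/4)) := by
    rw [← intervalIntegral.integral_of_le hy1.le, intervalIntegral.integral_const_mul]
    congr 1
    rw [show (∫ t in y..(1:ℝ), (1 - t) ^ (-(1/4):ℝ))
        = ∫ s in (1 - (1:ℝ))..(1 - y), s ^ (-(1/4):ℝ) from
      intervalIntegral.integral_comp_sub_left (fun s => s ^ (-(1/4):ℝ)) 1]
    have h10 : (1:ℝ) - 1 = 0 := by norm_num
    rw [h10, integral_rpow (Or.inl (by norm_num))]
    rw [Real.zero_rpow (by norm_num)]
    norm_num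
  calc ‖u y‖ ≤ ∫ t in Ioc y 1, ‖u' t‖ := hnormint
    _ ≤ D * ((1 - y) ^ ((3/4):ℝ) / (3/4)) := by rw [← hcalc]; exact hmono2
    _ = 4 * D / 3 * (1 - y) ^ ((3/4):ℝ) := by ring

lemma boundary_tendsto_right {u u' u'' v v' v'' : ℝ → ℂ}
    (hu : Nice u u' u'') (hv : Nice v v' v'') :
    Tendsto (fun b => u b * v' b - u' b * v b) (nhdsWithin 1 (Iio 1)) (nhds 0) := by
  obtain ⟨Du, hDu0, hDu⟩ := deriv_bound hu
  obtain ⟨Dv, hDv0, hDv⟩ := deriv_bound hv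
  obtain ⟨Cu, hCu0, hCu⟩ := u_bound hu
  obtain ⟨Cv, hCv0, hCv⟩ := u_bound hv
  set K := Cu * Dv + Du * Cv with hK
  have hbound : ∀ᶠ b in nhdsWithin (1:ℝ) (Iio 1),
      ‖u b * v' b - u' b * v b‖ ≤ K * (1 - b) ^ ((1/2) : ℝ) := by
    filter_upwards [Ioo_mem_nhdsLT_of_mem (show (1:ℝ) ∈ Ioc (0:ℝ) 1 by norm_num)] with b hb
    have hb' : b ∈ Ico (0:ℝ) 1 := ⟨hb.1.le, hb.2⟩
    have h1b : 0 < 1 - b := by linarith [hb.2]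
    have hhalf : (1 - b) ^ ((3/4) : ℝ) * (1 - b) ^ (-(1/4) : ℝ) = (1 - b) ^ ((1/2) : ℝ) := by
      rw [← Real.rpow_add h1b]; norm_num
    have e1 : ‖u b * v' b‖ ≤ Cu * Dv * (1 - b) ^ ((1/2) : ℝ) := by
      rw [norm_mul, ← hhalf]
      calc ‖u b‖ * ‖v' b‖ ≤ (Cu * (1 - b) ^ ((3/4) : ℝ)) * (Dv * (1 - b) ^ (-(1/4) : ℝ)) :=
        mul_le_mul (hCu b hb') (hDv b hb') (norm_nonneg _) (by positivity)
      _ = Cu * Dv * ((1 - b) ^ ((3/4) : ℝ) * (1 - b) ^ (-(1/4) : ℝ)) := by ring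
    have e2 : ‖u' b * v b‖ ≤ Du * Cv * (1 - b) ^ ((1/2) : ℝ) := by
      rw [norm_mul, ← hhalf]
      calc ‖u' b‖ * ‖v b‖ ≤ (Du * (1 - b) ^ (-(1/4) : ℝ)) * (Cv * (1 - b) ^ ((3/4) : ℝ)) :=
        mul_le_mul (hDu b hb') (hCv b hb') (norm_nonneg _) (by positivity)
      _ = Du * Cv * ((1 - b) ^ ((3/4) : ℝ) * (1 - b) ^ (-(1/4) : ℝ)) := by ring
    calc ‖u b * v' b - u' b * v b‖ ≤ ‖u b * v' b‖ + ‖u' b * v b‖ := norm_sub_le _ _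
      _ ≤ K * (1 - b) ^ ((1/2) : ℝ) := by rw [hK]; linarith
  have htend : Tendsto (fun b : ℝ => K * (1 - b) ^ ((1/2) : ℝ))
      (nhdsWithin 1 (Iio 1)) (nhds 0) := by
    have h1 : Tendsto (fun b : ℝ => 1 - b) (nhdsWithin 1 (Iio 1)) (nhds 0) := by
      have h1' : Tendsto (fun b : ℝ => 1 - b) (nhds 1) (nhds (1 - 1)) :=
        (continuous_const.sub continuous_id).tendsto 1
      rw [sub_self] at h1'
      exact h1'.mono_left nhdsWithin_le_nhds
    have h2 : Tendsto (fun x : ℝ => x ^ ((1/2) : ℝ)) (nhds 0) (nhds 0) := by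
      have hc := (Real.continuousAt_rpow_const 0 (1/2) (Or.inr (by norm_num)))
      have h0 : (0:ℝ) ^ ((1/2):ℝ) = 0 := Real.zero_rpow (by norm_num)
      rw [ContinuousAt, h0] at hc
      exact hc
    have := (h2.comp h1).const_mul K
    simpa using this
  exact squeeze_zero_norm' hbound htend

lemma boundary_tendsto_left {u u' u'' v v' v'' : ℝ → ℂ}
    (hu : Nice u u' u'') (hv : Nice v v' v'') :
    Tendsto (fun a => u a * v' a - u' a * v a) (nhdsWithin (-1) (Ioi (-1))) (nhds 0) := by
  have hR := boundary_tendsto_right (nice_neg hu) (nice_neg hv)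
  -- hR is about b ↦ u(-b) * (-v'(-b)) - (-u'(-b)) * v(-b) = -(u v' - u' v)(-b)
  have hmap : Tendsto (fun a : ℝ => -a) (nhdsWithin (-1 : ℝ) (Ioi (-1)))
      (nhdsWithin (1:ℝ) (Iio 1)) := by
    refine Tendsto.inf ?_ (tendsto_principal_principal.mpr ?_)
    · have := (continuous_neg.tendsto (-1 : ℝ))
      simpa using this
    · intro a ha
      simp only [mem_Iio]
      simp only [mem_Ioi] at ha
      linarith
  have := hR.comp hmap
  have heq : ((fun b => u (-b) * -v' (-b) - -u' (-b) * v (-b)) ∘ fun a => -a)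
      = fun a => -(u a * v' a - u' a * v a) := by
    funext a
    simp only [Function.comp_apply, neg_neg]
    ring
  rw [heq] at this
  have := this.neg
  simpa using this

lemma mul_integrable_1 {u u' u'' v v' v'' : ℝ → ℂ} (hu : Nice u u' u'') (hv : Nice v v' v'') :
    IntegrableOn (fun x => u x * v'' x) (Ioo (-1:ℝ) 1) := by
  have hasmu : AEStronglyMeasurable u (volume.restrict (Ioo (-1:ℝ) 1)) :=
    (contOn_of_ftc hu.int1 hu.ftc1).aestronglyMeasurable measurableSet_Ioo
  have hasmv'' : AEStronglyMeasurable v'' (volume.restrict (Ioo (-1:ℝ) 1)) :=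
    asm_of_locint hv.int2
  refine Integrable.mono' (((hu.l2.add hv.l2'').div_const 2)) (hasmu.mul hasmv'') ?_
  filter_upwards [ae_restrict_mem measurableSet_Ioo] with x hx
  have hc : 0 < 1 - x^2 := by nlinarith [hx.1, hx.2]
  rw [norm_mul]
  have := amgm_aux ‖u x‖ ‖v'' x‖ (1 - x^2) hc
  calc ‖u x‖ * ‖v'' x‖ ≤ (‖u x‖^2 * (1 - x^2)⁻¹ + ‖v'' x‖^2 * (1 - x^2)) / 2 := this
    _ = (‖u x‖^2 * (1 - x^2)⁻¹ + ‖v'' x‖^2 * (1 - x^2)) / 2 := rfl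

lemma mul_integrable_2 {u u' u'' v v' v'' : ℝ → ℂ} (hu : Nice u u' u'') (hv : Nice v v' v'') :
    IntegrableOn (fun x => u'' x * v x) (Ioo (-1:ℝ) 1) := by
  have := mul_integrable_1 hv hu
  exact this.congr_fun (fun x _ => by ring) measurableSet_Ioo

lemma mulw_integrable {u u' u'' v v' v'' : ℝ → ℂ} (hu : Nice u u' u'') (hv : Nice v v' v'') :
    IntegrableOn (fun x => u x * v x * ((1 - x^2 : ℝ) : ℂ)⁻¹) (Ioo (-1:ℝ) 1) := by
  have hasmu : AEStronglyMeasurable u (volume.restrict (Ioo (-1:ℝ) 1)) :=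
    (contOn_of_ftc hu.int1 hu.ftc1).aestronglyMeasurable measurableSet_Ioo
  have hasmv : AEStronglyMeasurable v (volume.restrict (Ioo (-1:ℝ) 1)) :=
    (contOn_of_ftc hv.int1 hv.ftc1).aestronglyMeasurable measurableSet_Ioo
  have hasmw : AEStronglyMeasurable (fun x : ℝ => ((1 - x^2 : ℝ) : ℂ)⁻¹)
      (volume.restrict (Ioo (-1:ℝ) 1)) := by
    refine ContinuousOn.aestronglyMeasurable ?_ measurableSet_Ioo
    intro x hx
    refine ContinuousAt.continuousWithinAt ?_
    have hcz : (1:ℝ) - x^2 ≠ 0 := by nlinarith [hx.1, hx.2]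
    exact ContinuousAt.inv₀ (by fun_prop) (Complex.ofReal_ne_zero.mpr hcz)
  refine Integrable.mono' ((hu.l2.add hv.l2).div_const 2) ((hasmu.mul hasmv).mul hasmw) ?_
  filter_upwards [ae_restrict_mem measurableSet_Ioo] with x hx
  have hc : 0 < 1 - x^2 := by nlinarith [hx.1, hx.2]
  rw [norm_mul, norm_mul, norm_inv, Complex.norm_real, Real.norm_eq_abs, abs_of_pos hc]
  have hAB : ‖u x‖ * ‖v x‖ ≤ (‖u x‖^2 + ‖v x‖^2) / 2 := by
    nlinarith [sq_nonneg (‖u x‖ - ‖v x‖)]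
  have hw : (0:ℝ) ≤ (1 - x^2)⁻¹ := (inv_pos.mpr hc).le
  calc ‖u x‖ * ‖v x‖ * (1 - x^2)⁻¹ ≤ (‖u x‖^2 + ‖v x‖^2) / 2 * (1 - x^2)⁻¹ :=
      mul_le_mul_of_nonneg_right hAB hw
    _ = (‖u x‖^2 * (1 - x^2)⁻¹ + ‖v x‖^2 * (1 - x^2)⁻¹) / 2 := by ring

lemma green_core {u u' u'' v v' v'' : ℝ → ℂ} (hu : Nice u u' u'') (hv : Nice v v' v'') :
    ∫ x in Ioo (-1:ℝ) 1, u x * v'' x = ∫ x in Ioo (-1:ℝ) 1, u'' x * v x := by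
  have hint1 := mul_integrable_1 hu hv
  have hint2 := mul_integrable_2 hu hv
  have hdiff : IntegrableOn (fun x => u x * v'' x - u'' x * v x) (Ioo (-1:ℝ) 1) :=
    hint1.sub hint2
  -- Step 1: Green's identity on compact subintervals
  have hstep : ∀ a ∈ Ioo (-1:ℝ) 1, ∀ b ∈ Ioo (-1:ℝ) 1, a ≤ b →
      ∫ x in Ioc a b, (u x * v'' x - u'' x * v x)
        = (u b * v' b - u' b * v b) - (u a * v' a - u' a * v a) := by
    intro a ha b hb hab
    have hIccsub : Icc a b ⊆ Ioo (-1:ℝ) 1 := fun y hy =>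
      ⟨lt_of_lt_of_le ha.1 hy.1, lt_of_le_of_lt hy.2 hb.2⟩
    have hIocsub : Ioc a b ⊆ Ioo (-1:ℝ) 1 := fun y hy => hIccsub (Ioc_subset_Icc_self hy)
    have hu' : IntegrableOn u' (Ioc a b) :=
      (intervalIntegrable_iff_integrableOn_Ioc_of_le hab).mp (hu.int1 a ha b hb)
    have hv' : IntegrableOn v' (Ioc a b) :=
      (intervalIntegrable_iff_integrableOn_Ioc_of_le hab).mp (hv.int1 a ha b hb)
    have hu'' : IntegrableOn u'' (Ioc a b) :=
      (intervalIntegrable_iff_integrableOn_Ioc_of_le hab).mp (hu.int2 a ha b hb)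
    have hv'' : IntegrableOn v'' (Ioc a b) :=
      (intervalIntegrable_iff_integrableOn_Ioc_of_le hab).mp (hv.int2 a ha b hb)
    have hpu : ∀ y ∈ Icc a b, u y = u a + ∫ t in a..y, u' t := fun y hy => by
      have := hu.ftc1 a (hIccsub ⟨le_rfl, hab⟩) y (hIccsub hy); linear_combination this
    have hpv : ∀ y ∈ Icc a b, v y = v a + ∫ t in a..y, v' t := fun y hy => by
      have := hv.ftc1 a (hIccsub ⟨le_rfl, hab⟩) y (hIccsub hy); linear_combination this
    have hpu' : ∀ y ∈ Icc a b, u' y = u' a + ∫ t in a..y, u'' t := fun y hy => by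
      have := hu.ftc2 a (hIccsub ⟨le_rfl, hab⟩) y (hIccsub hy); linear_combination this
    have hpv' : ∀ y ∈ Icc a b, v' y = v' a + ∫ t in a..y, v'' t := fun y hy => by
      have := hv.ftc2 a (hIccsub ⟨le_rfl, hab⟩) y (hIccsub hy); linear_combination this
    have I1 := my_ibp hab u u' v' v'' hu' hv'' hpu hpv'
    have I2 := my_ibp hab v v' u' u'' hv' hu'' hpv hpu'
    have hcomm : ∫ x in Ioc a b, v' x * u' x = ∫ x in Ioc a b, u' x * v' x := by
      apply setIntegral_congr_fun measurableSet_Ioc; intro x _; ring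
    have hcomm2 : ∫ x in Ioc a b, v x * u'' x = ∫ x in Ioc a b, u'' x * v x := by
      apply setIntegral_congr_fun measurableSet_Ioc; intro x _; ring
    rw [integral_sub (hint1.mono_set hIocsub) (hint2.mono_set hIocsub)]
    linear_combination I1 - I2 + hcomm + hcomm2
  -- Step 2: exhaust (-1, 1) by compact subintervals
  set aseq : ℕ → ℝ := fun n => 1/(n+1) - 1 with haseq
  set bseq : ℕ → ℝ := fun n => 1 - 1/(n+1) with hbseq
  have hp : ∀ n : ℕ, (0:ℝ) < 1/(n+1) := fun n => by positivity
  have hle1 : ∀ n : ℕ, (1:ℝ)/(n+1) ≤ 1 := fun n => by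
    rw [div_le_one (by positivity)]; simp
  have haI : ∀ n, aseq n ∈ Ioo (-1:ℝ) 1 := fun n =>
    ⟨by have h1 := hp n; have h2 := hle1 n; simp only [haseq]; linarith,
     by have h1 := hp n; have h2 := hle1 n; simp only [haseq]; linarith⟩
  have hbI : ∀ n, bseq n ∈ Ioo (-1:ℝ) 1 := fun n =>
    ⟨by have h1 := hp n; have h2 := hle1 n; simp only [hbseq]; linarith,
     by have h1 := hp n; have h2 := hle1 n; simp only [hbseq]; linarith⟩
  have habs : ∀ n, aseq n ≤ bseq n := fun n => by
    have := hle1 n; simp only [haseq, hbseq]; linarith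
  have hmonoseq : ∀ m n : ℕ, m ≤ n → 1/((n:ℝ)+1) ≤ 1/((m:ℝ)+1) := by
    intro m n hmn
    apply one_div_le_one_div_of_le (by positivity)
    have : (m:ℝ) ≤ n := Nat.cast_le.mpr hmn
    linarith
  have hmono : Monotone (fun n => Ioc (aseq n) (bseq n)) := by
    intro m n hmn
    apply Ioc_subset_Ioc
    · simp only [haseq]; linarith [hmonoseq m n hmn]
    · simp only [hbseq]; linarith [hmonoseq m n hmn]
  have hU : (⋃ n : ℕ, Ioc (aseq n) (bseq n)) = Ioo (-1:ℝ) 1 := union_Ioc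
  have htendInt := tendsto_setIntegral_of_monotone (μ := volume)
    (f := fun x => u x * v'' x - u'' x * v x)
    (s := fun n => Ioc (aseq n) (bseq n)) (fun i => measurableSet_Ioc) hmono
    (by rw [hU]; exact hdiff)
  rw [hU] at htendInt
  -- limit of boundary values
  have htb : Tendsto bseq atTop (nhdsWithin 1 (Iio 1)) := by
    apply tendsto_nhdsWithin_of_tendsto_nhds_of_eventually_within
    · have h0 : Tendsto (fun n : ℕ => 1/((n:ℝ)+1)) atTop (nhds 0) :=
        tendsto_one_div_add_atTop_nhds_zero_nat
      have := h0.const_sub 1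
      simpa only [hbseq, sub_zero] using this
    · exact Filter.Eventually.of_forall fun n => by
        simp only [hbseq, mem_Iio]; linarith [hp n]
  have hta : Tendsto aseq atTop (nhdsWithin (-1) (Ioi (-1))) := by
    apply tendsto_nhdsWithin_of_tendsto_nhds_of_eventually_within
    · have h0 : Tendsto (fun n : ℕ => 1/((n:ℝ)+1)) atTop (nhds 0) :=
        tendsto_one_div_add_atTop_nhds_zero_nat
      have h1 := h0.sub_const 1
      simpa only [haseq, zero_sub] using h1
    · exact Filter.Eventually.of_forall fun n => by
        simp only [haseq, mem_Ioi]; linarith [hp n]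
  have hBb := (boundary_tendsto_right hu hv).comp htb
  have hBa := (boundary_tendsto_left hu hv).comp hta
  have htend0 : Tendsto (fun n => ∫ x in Ioc (aseq n) (bseq n), (u x * v'' x - u'' x * v x))
      atTop (nhds 0) := by
    have heval : (fun n => ∫ x in Ioc (aseq n) (bseq n), (u x * v'' x - u'' x * v x))
        = fun n => (u (bseq n) * v' (bseq n) - u' (bseq n) * v (bseq n))
          - (u (aseq n) * v' (aseq n) - u' (aseq n) * v (aseq n)) := by
      funext n
      exact hstep (aseq n) (haI n) (bseq n) (hbI n) (habs n)
    rw [heval]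
    have := hBb.sub hBa
    simpa using this
  have hzero : ∫ x in Ioo (-1:ℝ) 1, (u x * v'' x - u'' x * v x) = 0 :=
    tendsto_nhds_unique htendInt htend0
  rw [integral_sub hint1 hint2] at hzero
  linear_combination hzero

/-- Green's formula with vanishing boundary terms: for all `f, g` in the maximal domain
`Δ`, `∫ ℓ[f]·conj(g)·(1-x²)⁻¹ = ∫ f·conj(ℓ[g])·(1-x²)⁻¹`; i.e. the maximal operator
`A f = ℓ[f]` on `Δ` is symmetric in `L²((-1,1); (1-x²)⁻¹ dx)`. -/
theorem greens_formula_symmetric (k : ℝ) (hk : 0 ≤ k)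
    (f f' f'' g g' g'' : ℝ → ℂ)
    (hf : InJacobiMaxDomain k f f' f'') (hg : InJacobiMaxDomain k g g' g'') :
    ∫ x in Ioo (-1 : ℝ) 1,
        (-((1 - x ^ 2 : ℝ) : ℂ) * f'' x + (k : ℂ) * f x) * star (g x) *
          ((1 - x ^ 2 : ℝ) : ℂ)⁻¹ =
    ∫ x in Ioo (-1 : ℝ) 1,
        f x * star (-((1 - x ^ 2 : ℝ) : ℂ) * g'' x + (k : ℂ) * g x) *
          ((1 - x ^ 2 : ℝ) : ℂ)⁻¹ := by
  have hNf : Nice f f' f'' := nice_of_mem hf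
  have hNg : Nice g g' g'' := nice_of_mem hg
  have hNG : Nice (fun x => star (g x)) (fun x => star (g' x)) (fun x => star (g'' x)) :=
    nice_star hNg
  have hI1 : IntegrableOn (fun x => f'' x * star (g x)) (Ioo (-1:ℝ) 1) :=
    mul_integrable_2 hNf hNG
  have hI2 : IntegrableOn (fun x => f x * star (g'' x)) (Ioo (-1:ℝ) 1) :=
    mul_integrable_1 hNf hNG
  have hI3 : IntegrableOn (fun x => f x * star (g x) * ((1 - x^2 : ℝ):ℂ)⁻¹) (Ioo (-1:ℝ) 1) :=
    mulw_integrable hNf hNG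
  have hcore : ∫ x in Ioo (-1:ℝ) 1, f x * star (g'' x)
      = ∫ x in Ioo (-1:ℝ) 1, f'' x * star (g x) := green_core hNf hNG
  have hLHS : ∫ x in Ioo (-1:ℝ) 1,
        (-((1 - x ^ 2 : ℝ) : ℂ) * f'' x + (k : ℂ) * f x) * star (g x) *
          ((1 - x ^ 2 : ℝ) : ℂ)⁻¹
      = ∫ x in Ioo (-1:ℝ) 1,
        (-(f'' x * star (g x)) + (k:ℂ) * (f x * star (g x) * ((1 - x^2:ℝ):ℂ)⁻¹)) := by
    apply setIntegral_congr_fun measurableSet_Ioo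
    intro x hx
    have hc : ((1 - x^2 : ℝ):ℂ) ≠ 0 := Complex.ofReal_ne_zero.mpr (by nlinarith [hx.1, hx.2])
    have hc' : (1:ℂ) - (x:ℂ)^2 ≠ 0 := by push_cast at hc; exact hc
    dsimp only
    push_cast
    field_simp
  have hRHS : ∫ x in Ioo (-1:ℝ) 1,
        f x * star (-((1 - x ^ 2 : ℝ) : ℂ) * g'' x + (k : ℂ) * g x) *
          ((1 - x ^ 2 : ℝ) : ℂ)⁻¹
      = ∫ x in Ioo (-1:ℝ) 1,
        (-(f x * star (g'' x)) + (k:ℂ) * (f x * star (g x) * ((1 - x^2:ℝ):ℂ)⁻¹)) := by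
    apply setIntegral_congr_fun measurableSet_Ioo
    intro x hx
    have hc : ((1 - x^2 : ℝ):ℂ) ≠ 0 := Complex.ofReal_ne_zero.mpr (by nlinarith [hx.1, hx.2])
    have hc' : (1:ℂ) - (x:ℂ)^2 ≠ 0 := by push_cast at hc; exact hc
    dsimp only
    have hstar : star (-((1 - x ^ 2 : ℝ) : ℂ) * g'' x + (k : ℂ) * g x)
        = -((1 - x ^ 2 : ℝ) : ℂ) * star (g'' x) + (k : ℂ) * star (g x) := by
      simp only [star_add, star_mul', star_neg, Complex.star_def, Complex.conj_ofReal]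
    rw [hstar]
    push_cast
    field_simp
  have hI1n : IntegrableOn (fun x => -(f'' x * star (g x))) (Ioo (-1:ℝ) 1) := hI1.neg
  have hI2n : IntegrableOn (fun x => -(f x * star (g'' x))) (Ioo (-1:ℝ) 1) := hI2.neg
  have hI3k : IntegrableOn
      (fun x => (k:ℂ) * (f x * star (g x) * ((1 - x^2:ℝ):ℂ)⁻¹)) (Ioo (-1:ℝ) 1) :=
    hI3.const_mul _
  rw [hLHS, hRHS, integral_add hI1n hI3k, integral_add hI2n hI3k,
    integral_neg, integral_neg, hcore]
end

section
/- Let k > 0 and n ∈ ℕ. For each integer m ≥ 2, let Q_m be a polynomial of degree m satisfying -(1-x²)Q_m''(x) + k·Q_m(x) = (m(m-1)+k)·Q_m(x) and normalized so that ∫_{-1}^{1} |Q_m(x)|²(1-x²)^{-1}dx = 1. Then for all m, l ≥ 2: Σ_{j=0}^{n} c_j(n,k)·∫_{-1}^{1} Q_m^{(j)}(x)·Q̄_l^{(j)}(x)·(1-x²)^{j-1}dx = (m(m-1)+k)^n·δ_{ml}. -/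
open MeasureTheory Set

/-- The Jacobi–Stirling numbers `{m, j}₀`. -/
noncomputable def jacobiStirling (m j : ℕ) : ℝ :=
  if j = 0 then (if m = 0 then 1 else 0)
  else if j = 1 then (if m = 1 then 1 else 0)
  else ∑ r ∈ Finset.Icc 2 j,
    (-1 : ℝ) ^ (r + j) * (2 * (r : ℝ) - 1) * (Nat.factorial (r - 2) : ℝ) *
        ((r * (r - 1) : ℕ) : ℝ) ^ m /
      ((Nat.factorial r : ℝ) * (Nat.factorial (j - r) : ℝ) *
        (Nat.factorial (j + r - 1) : ℝ))

/-- The left-definite coefficients `c_j(n,k)`. -/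
noncomputable def cLD (n j : ℕ) (k : ℝ) : ℝ :=
  if j = 0 then k ^ n
  else ∑ r ∈ Finset.range (n - j + 1), (n.choose r : ℝ) * jacobiStirling (n - r) j * k ^ r

/-! ### auxiliary combinatorics -/

noncomputable def tC (r : ℕ) : ℝ := ((r * (r - 1) : ℕ) : ℝ)

lemma tC_cast (r : ℕ) : tC r = (r : ℝ) * ((r : ℝ) - 1) := by
  cases r with
  | zero => simp [tC]
  | succ a => simp only [tC]; push_cast [Nat.succ_sub_one]; ring

noncomputable def Aco (r j : ℕ) : ℝ :=
  (-1 : ℝ) ^ (r + j) * (2 * (r : ℝ) - 1) * (Nat.factorial (r - 2) : ℝ) /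
      ((Nat.factorial r : ℝ) * (Nat.factorial (j - r) : ℝ) * (Nat.factorial (j + r - 1) : ℝ))

noncomputable def Fex (m j : ℕ) : ℝ := ∑ r ∈ Finset.Icc 2 j, Aco r j * tC r ^ m

lemma js_eq_Fex (m j : ℕ) (hj : 2 ≤ j) : jacobiStirling m j = Fex m j := by
  have h0 : j ≠ 0 := by omega
  have h1 : j ≠ 1 := by omega
  rw [jacobiStirling, if_neg h0, if_neg h1, Fex]
  refine Finset.sum_congr rfl fun r _ => ?_
  rw [Aco, tC]; ring

lemma Aco_step (r j : ℕ) (h2 : 2 ≤ r) (hrj : r ≤ j) :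
    (tC r - tC (j + 1)) * Aco r (j + 1) = Aco r j := by
  have e1 : j + 1 - r = (j - r) + 1 := by omega
  have e2 : j + 1 + r - 1 = (j + r - 1) + 1 := by omega
  have e3 : j + r - 1 + 1 = j + r := by omega
  have hc1 : ((j - r : ℕ) : ℝ) = (j : ℝ) - r := by
    push_cast [Nat.cast_sub hrj]; ring
  have ht : tC r - tC (j + 1) = -((((j - r) + 1 : ℕ) : ℝ) * ((j + r : ℕ) : ℝ)) := by
    rw [tC_cast, tC_cast]; push_cast [hc1]; ring
  rw [Aco, Aco, e1, e2, Nat.factorial_succ, Nat.factorial_succ, e3, ht]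
  have hp : (-1 : ℝ) ^ (r + (j + 1)) = -(-1 : ℝ) ^ (r + j) := by
    rw [show r + (j + 1) = (r + j) + 1 by ring, pow_succ]; ring
  rw [hp, Nat.cast_mul, Nat.cast_mul]
  set a := (((j - r) + 1 : ℕ) : ℝ) with ha
  set b := ((j + r : ℕ) : ℝ) with hb
  set f1 := (Nat.factorial r : ℝ)
  set f2 := (Nat.factorial (j - r) : ℝ)
  set f3 := (Nat.factorial (j + r - 1) : ℝ)
  set c := (Nat.factorial (r - 2) : ℝ)
  set e := (-1 : ℝ) ^ (r + j)
  have hf1 : f1 ≠ 0 := Nat.cast_ne_zero.2 (Nat.factorial_ne_zero r)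
  have hf2 : f2 ≠ 0 := Nat.cast_ne_zero.2 (Nat.factorial_ne_zero _)
  have hf3 : f3 ≠ 0 := Nat.cast_ne_zero.2 (Nat.factorial_ne_zero _)
  have hn1 : a ≠ 0 := by
    have h : 0 < (j - r) + 1 := Nat.succ_pos _
    rw [ha]; exact_mod_cast h.ne'
  have hn2 : b ≠ 0 := by
    have h : 0 < j + r := by omega
    rw [hb]; exact_mod_cast h.ne' 
  field_simp

lemma Fex_rec (p j : ℕ) (hj : 3 ≤ j) :
    Fex (p + 1) j = tC j * Fex p j + Fex p (j - 1) := by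
  obtain ⟨i, rfl⟩ : ∃ i, j = i + 1 := ⟨j - 1, by omega⟩
  have hi : 2 ≤ i := by omega
  have e : i + 1 - 1 = i := rfl
  rw [e]
  have h1 : Fex p i = ∑ r ∈ Finset.Icc 2 (i + 1),
      (tC r - tC (i + 1)) * Aco r (i + 1) * tC r ^ p := by
    rw [Finset.sum_Icc_succ_top (by omega : 2 ≤ i + 1)]
    rw [Fex]
    rw [show (tC (i+1) - tC (i+1)) * Aco (i+1) (i+1) * tC (i+1) ^ p = 0 by ring, add_zero]
    refine Finset.sum_congr rfl fun r hr => ?_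
    rw [Finset.mem_Icc] at hr
    rw [Aco_step r i hr.1 hr.2]
  rw [h1, Fex, Fex, Finset.mul_sum, ← Finset.sum_add_distrib]
  refine Finset.sum_congr rfl fun r _ => ?_
  ring

lemma Fex_rec2 (p : ℕ) : Fex (p + 1) 2 = 2 * Fex p 2 := by
  have : Finset.Icc 2 2 = {2} := Finset.Icc_self 2
  rw [Fex, Fex, this, Finset.sum_singleton, Finset.sum_singleton]
  have ht : tC 2 = 2 := by rw [tC_cast]; norm_num
  rw [ht]; ring

lemma altchoose (N d : ℕ) (h : d < N) :
    ∑ s ∈ Finset.range (N + 1), (-1 : ℝ) ^ s * (N.choose s : ℝ) * (s.choose d : ℝ) = 0 := by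
  rw [Finset.range_eq_Ico, ← Finset.sum_Ico_consecutive _ (Nat.zero_le d) (by omega : d ≤ N + 1)]
  have h1 : ∑ s ∈ Finset.Ico 0 d, (-1 : ℝ) ^ s * (N.choose s : ℝ) * (s.choose d : ℝ) = 0 := by
    refine Finset.sum_eq_zero fun s hs => ?_
    rw [Finset.mem_Ico] at hs
    rw [Nat.choose_eq_zero_of_lt hs.2]
    simp
  rw [h1, zero_add, Finset.sum_Ico_eq_sum_range]
  have e : N + 1 - d = (N - d) + 1 := by omega
  rw [e]
  have h2 : ∀ u ∈ Finset.range ((N - d) + 1),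
      (-1 : ℝ) ^ (d + u) * (N.choose (d + u) : ℝ) * ((d + u).choose d : ℝ) =
      ((-1 : ℝ) ^ d * (N.choose d : ℝ)) * ((-1 : ℝ) ^ u * ((N - d).choose u : ℝ)) := by
    intro u hu
    rw [Finset.mem_range] at hu
    have hdu : d + u ≤ N := by omega
    have hm := Nat.choose_mul (n := N) (Nat.le_add_right d u)
    have e2 : d + u - d = u := by omega
    rw [e2] at hm
    have hmR : (N.choose (d + u) : ℝ) * ((d + u).choose d : ℝ) =
        (N.choose d : ℝ) * ((N - d).choose u : ℝ) := by exact_mod_cast congrArg Nat.cast hm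
    rw [pow_add]
    linear_combination ((-1:ℝ)^d * (-1)^u) * hmR
  rw [Finset.sum_congr rfl h2, ← Finset.mul_sum]
  have h3 : ∑ u ∈ Finset.range ((N - d) + 1), (-1 : ℝ) ^ u * ((N - d).choose u : ℝ) = 0 := by
    have := Int.alternating_sum_range_choose_of_ne (n := N - d) (by omega)
    exact_mod_cast this
  rw [h3, mul_zero]

lemma cast_choose_three (s : ℕ) :
    (s.choose 3 : ℝ) = (s : ℝ) * ((s : ℝ) - 1) * ((s : ℝ) - 2) / 6 := by
  match s with
  | 0 => norm_num [Nat.choose]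
  | 1 => norm_num [Nat.choose]
  | 2 => norm_num [Nat.choose]
  | (u + 3) =>
    have h2 := Nat.descFactorial_eq_factorial_mul_choose (u + 3) 3
    have h1 : (u + 3).descFactorial 3 = (u + 1) * ((u + 2) * ((u + 3) * 1)) := rfl
    have h3 : Nat.factorial 3 = 6 := rfl
    rw [h1, h3] at h2
    have : ((u + 1) * ((u + 2) * ((u + 3) * 1)) : ℝ) = 6 * ((u + 3).choose 3 : ℝ) := by
      exact_mod_cast congrArg Nat.cast h2
    push_cast at this ⊢
    linarith

lemma altcube (N : ℕ) (hN : 3 < N) (a b c d : ℝ) :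
    ∑ s ∈ Finset.range (N + 1),
      (-1 : ℝ) ^ s * (N.choose s : ℝ) * (a + b * s + c * s ^ 2 + d * s ^ 3) = 0 := by
  have h0 := altchoose N 0 (by omega)
  have h1 := altchoose N 1 (by omega)
  have h2 := altchoose N 2 (by omega)
  have h3 := altchoose N 3 (by omega)
  have key : ∀ s ∈ Finset.range (N + 1),
      (-1 : ℝ) ^ s * (N.choose s : ℝ) * (a + b * s + c * s ^ 2 + d * s ^ 3) =
      a * ((-1 : ℝ) ^ s * (N.choose s : ℝ) * (s.choose 0 : ℝ)) +
      (b + c + d) * ((-1 : ℝ) ^ s * (N.choose s : ℝ) * (s.choose 1 : ℝ)) +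
      (2 * c + 6 * d) * ((-1 : ℝ) ^ s * (N.choose s : ℝ) * (s.choose 2 : ℝ)) +
      6 * d * ((-1 : ℝ) ^ s * (N.choose s : ℝ) * (s.choose 3 : ℝ)) := by
    intro s _
    rw [Nat.choose_zero_right, Nat.choose_one_right, Nat.cast_choose_two, cast_choose_three]
    push_cast
    ring
  rw [Finset.sum_congr rfl key]
  rw [Finset.sum_add_distrib, Finset.sum_add_distrib, Finset.sum_add_distrib,
    ← Finset.mul_sum, ← Finset.mul_sum, ← Finset.mul_sum, ← Finset.mul_sum,
    h0, h1, h2, h3]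
  ring

lemma tC_ne_zero (a : ℕ) : tC (a + 2) ≠ 0 := by
  rw [tC_cast]
  have : (0:ℝ) < ((a:ℝ) + 2) * (((a:ℝ) + 2) - 1) := by push_cast; nlinarith [Nat.cast_nonneg (α := ℝ) a]
  push_cast at this ⊢
  exact this.ne'

lemma Fex_two (j : ℕ) (hj : 3 ≤ j) : Fex 2 j = 0 := by
  classical
  set g : ℕ → ℝ := fun r =>
    (-1 : ℝ) ^ (r + j) * (2 * (r : ℝ) - 1) * tC r * (((2 * j - 1).choose (j - r) : ℕ) : ℝ)
    with hg
  -- Step A : rewrite Fex 2 j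
  have key : ∀ r ∈ Finset.Icc 2 j,
      Aco r j * tC r ^ 2 = g r / (Nat.factorial (2 * j - 1) : ℝ) := by
    intro r hr
    rw [Finset.mem_Icc] at hr
    obtain ⟨a, rfl⟩ : ∃ a, r = a + 2 := ⟨r - 2, by omega⟩
    have hC := Nat.choose_mul_factorial_mul_factorial (show j - (a + 2) ≤ 2 * j - 1 by omega)
    have e : 2 * j - 1 - (j - (a + 2)) = j + a + 1 := by omega
    rw [e] at hC
    have hf2 : (Nat.factorial (j - (a + 2)) : ℝ) ≠ 0 := Nat.cast_ne_zero.2 (Nat.factorial_ne_zero _)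
    have hf3 : (Nat.factorial (j + a + 1) : ℝ) ≠ 0 := Nat.cast_ne_zero.2 (Nat.factorial_ne_zero _)
    have hCdiv : (((2 * j - 1).choose (j - (a + 2)) : ℕ) : ℝ) =
        (Nat.factorial (2 * j - 1) : ℝ) /
          ((Nat.factorial (j - (a + 2)) : ℝ) * (Nat.factorial (j + a + 1) : ℝ)) := by
      rw [eq_div_iff (by exact mul_ne_zero hf2 hf3)]
      rw [← mul_assoc]
      exact_mod_cast congrArg Nat.cast hC
    have hfact : (Nat.factorial (a + 2) : ℝ) = tC (a + 2) * (Nat.factorial a : ℝ) := by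
      rw [tC_cast, Nat.factorial_succ, Nat.factorial_succ]
      push_cast
      ring
    have e2 : a + 2 - 2 = a := by omega
    rw [Aco, hg, e2, hfact]
    simp only [show j + (a + 2) - 1 = j + a + 1 from by omega]
    rw [hCdiv]
    have hf0 : (Nat.factorial a : ℝ) ≠ 0 := Nat.cast_ne_zero.2 (Nat.factorial_ne_zero _)
    have hfN : (Nat.factorial (2 * j - 1) : ℝ) ≠ 0 := Nat.cast_ne_zero.2 (Nat.factorial_ne_zero _)
    have htne := tC_ne_zero a
    field_simp
  have hsub : Finset.Icc 2 j ⊆ Finset.range (j + 1) := by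
    intro r hr; rw [Finset.mem_Icc] at hr; rw [Finset.mem_range]; omega
  have hzero : ∀ r ∈ Finset.range (j + 1), r ∉ Finset.Icc 2 j → g r = 0 := by
    intro r hr hnr
    rw [Finset.mem_range] at hr
    rw [Finset.mem_Icc] at hnr
    have hr01 : r = 0 ∨ r = 1 := by omega
    have ht : tC r = 0 := by rcases hr01 with h | h <;> simp [h, tC]
    simp only [hg, ht]
    ring
  have hsum : Fex 2 j = (∑ r ∈ Finset.range (j + 1), g r) / (Nat.factorial (2 * j - 1) : ℝ) := by
    rw [Fex, Finset.sum_congr rfl key, ← Finset.sum_div]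
    rw [Finset.sum_subset hsub hzero]
  -- Step B : the reflected sum
  set T : ℕ → ℝ := fun s =>
    (-1 : ℝ) ^ s * (((2 * j - 1).choose s : ℕ) : ℝ) *
      ((2 * ((j : ℝ) - s) - 1) * ((j : ℝ) - s) * ((j : ℝ) - s - 1)) with hT
  have gT : ∀ s ∈ Finset.range (j + 1), g (j - s) = T s := by
    intro s hs
    rw [Finset.mem_range] at hs
    have hsj : s ≤ j := by omega
    have hpow : (-1 : ℝ) ^ ((j - s) + j) = (-1 : ℝ) ^ s := by
      rw [show (j - s) + j = 2 * (j - s) + s by omega, pow_add, pow_mul]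
      norm_num
    have e1 : j - (j - s) = s := by omega
    have hc : ((j - s : ℕ) : ℝ) = (j : ℝ) - s := Nat.cast_sub hsj
    simp only [hg, hT]
    rw [hpow, e1, tC_cast, hc]
    ring
  have refl1 : ∑ r ∈ Finset.range (j + 1), g r = ∑ s ∈ Finset.range (j + 1), T s := by
    rw [← Finset.sum_range_reflect (fun r => g r) (j + 1)]
    refine Finset.sum_congr rfl fun s hs => ?_
    rw [show j + 1 - 1 - s = j - s by omega]
    exact gT s hs
  have Tj : T j = 0 := by
    simp only [hT, sub_self]
    ring
  -- Step C : big alternating sum is zero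
  have big0 : ∑ s ∈ Finset.range (2 * j), T s = 0 := by
    have h := altcube (2 * j - 1) (by omega)
      (2 * (j:ℝ)^3 - 3 * (j:ℝ)^2 + j) (-6 * (j:ℝ)^2 + 6 * (j:ℝ) - 1) (6 * (j:ℝ) - 3) (-2)
    rw [show 2 * j - 1 + 1 = 2 * j by omega] at h
    rw [← h]
    refine Finset.sum_congr rfl fun s _ => ?_
    simp only [hT]
    ring
  -- Step D : pairing
  have pair : ∀ i ∈ Finset.range j, T (j + i) = T (j - 1 - i) := by
    intro i hi
    rw [Finset.mem_range] at hi
    have e1 : 2 * j - 1 - (j + i) = j - 1 - i := by omega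
    have hsym : (2 * j - 1).choose (j - 1 - i) = (2 * j - 1).choose (j + i) := by
      rw [← e1]; exact Nat.choose_symm (by omega)
    have hc1 : ((j - 1 - i : ℕ) : ℝ) = (j : ℝ) - 1 - i := by
      have h1 : ((j - 1 - i : ℕ) : ℝ) = ((j - (1 + i) : ℕ) : ℝ) := by congr 1; omega
      rw [h1, Nat.cast_sub (by omega)]; push_cast; ring
    have hm1 : (-1 : ℝ) ^ (2 * i + 1) = -1 := by
      rw [pow_succ, pow_mul]; norm_num
    have hpow2 : (-1 : ℝ) ^ (j + i) = (-1 : ℝ) ^ (j - 1 - i) * (-1 : ℝ) ^ (2 * i + 1) := by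
      rw [← pow_add]; congr 1; omega
    simp only [hT]
    rw [hsym, hc1, hpow2, hm1]
    push_cast
    ring
  have refl2 : ∑ i ∈ Finset.range j, T (j + i) = ∑ s ∈ Finset.range j, T s := by
    calc ∑ i ∈ Finset.range j, T (j + i) = ∑ i ∈ Finset.range j, T (j - 1 - i) :=
          Finset.sum_congr rfl pair
      _ = ∑ s ∈ Finset.range j, T s := Finset.sum_range_reflect _ j
  have e2 : ∑ i ∈ Finset.Ico j (2 * j), T i = ∑ i ∈ Finset.range j, T (j + i) := by
    rw [Finset.sum_Ico_eq_sum_range, show 2 * j - j = j by omega]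
  have split : ∑ s ∈ Finset.range (2 * j), T s
      = ∑ s ∈ Finset.range j, T s + ∑ i ∈ Finset.range j, T (j + i) := by
    rw [← e2, Finset.range_eq_Ico, Finset.range_eq_Ico,
      Finset.sum_Ico_consecutive _ (Nat.zero_le j) (by omega : j ≤ 2 * j)]
  have half0 : ∑ s ∈ Finset.range j, T s = 0 := by
    rw [split, refl2] at big0
    linarith
  have total : ∑ s ∈ Finset.range (j + 1), T s = 0 := by
    rw [Finset.sum_range_succ, Tj, add_zero, half0]
  rw [hsum, refl1, total, zero_div]

lemma js_eq_zero_right (p : ℕ) : jacobiStirling p 0 = if p = 0 then 1 else 0 := by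
  rw [jacobiStirling]; simp

lemma js_eq_one_right (p : ℕ) : jacobiStirling p 1 = if p = 1 then 1 else 0 := by
  rw [jacobiStirling]; simp

lemma js_rec (p j : ℕ) (hp : 2 ≤ p) (hj : 2 ≤ j) :
    jacobiStirling (p + 1) j = tC j * jacobiStirling p j + jacobiStirling p (j - 1) := by
  rcases eq_or_lt_of_le hj with h2 | h3
  · subst h2
    rw [js_eq_Fex _ _ (le_refl 2), js_eq_Fex _ _ (le_refl 2), Fex_rec2]
    have h1 : jacobiStirling p (2 - 1) = 0 := by
      rw [show (2:ℕ) - 1 = 1 from rfl, js_eq_one_right, if_neg (by omega)]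
    rw [h1, add_zero]
    have ht : tC 2 = 2 := by rw [tC_cast]; norm_num
    rw [ht]
  · have hj3 : 3 ≤ j := h3
    rw [js_eq_Fex _ _ hj, js_eq_Fex _ _ hj, js_eq_Fex _ _ (show 2 ≤ j - 1 by omega),
      Fex_rec p j hj3]

lemma js22 : jacobiStirling 2 2 = 1 := by
  rw [jacobiStirling]
  norm_num [Finset.Icc_self, Nat.factorial]

lemma js_vanish : ∀ m, 2 ≤ m → ∀ j, m < j → jacobiStirling m j = 0 := by
  intro m hm
  induction m, hm using Nat.le_induction with
  | base =>
    intro j hj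
    rw [js_eq_Fex _ _ (by omega), Fex_two _ (by omega)]
  | succ m hm ih =>
    intro j hj
    rw [js_rec m j hm (by omega), ih j (by omega), ih (j - 1) (by omega)]
    ring

noncomputable def JSrec : ℕ → ℕ → ℝ
  | 0, 0 => 1
  | 0, _ + 1 => 0
  | _ + 1, 0 => 0
  | p + 1, j + 1 => (((j + 1) * j : ℕ) : ℝ) * JSrec p (j + 1) + JSrec p j

lemma JSrec_zero_right (p : ℕ) : JSrec p 0 = if p = 0 then 1 else 0 := by
  cases p <;> simp [JSrec]

lemma JSrec_eq_zero : ∀ p j, p < j → JSrec p j = 0 := by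
  intro p
  induction p with
  | zero => intro j hj; obtain ⟨j', rfl⟩ : ∃ j', j = j' + 1 := ⟨j - 1, by omega⟩; rfl
  | succ p ih =>
    intro j hj
    obtain ⟨j', rfl⟩ : ∃ j', j = j' + 1 := ⟨j - 1, by omega⟩
    show (((j' + 1) * j' : ℕ) : ℝ) * JSrec p (j' + 1) + JSrec p j' = 0
    rw [ih (j' + 1) (by omega), ih j' (by omega)]
    ring

noncomputable def dprod (μ : ℂ) (j : ℕ) : ℂ :=
  ∏ i ∈ Finset.range j, (μ - (i : ℂ) * ((i : ℂ) - 1))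

lemma dprod_succ (μ : ℂ) (j : ℕ) :
    dprod μ (j + 1) = dprod μ j * (μ - (j : ℂ) * ((j : ℂ) - 1)) :=
  Finset.prod_range_succ _ _

lemma newton (p : ℕ) (μ : ℂ) :
    ∑ j ∈ Finset.range (p + 1), (JSrec p j : ℂ) * dprod μ j = μ ^ p := by
  induction p with
  | zero => simp [JSrec, dprod]
  | succ p ih =>
    set F : ℕ → ℂ := fun i => ((i : ℂ) * ((i : ℂ) - 1)) * (JSrec p i : ℂ) * dprod μ i with hF
    have hstep : ∀ j, (JSrec (p + 1) (j + 1) : ℂ)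
        = ((j : ℂ) + 1) * (j : ℂ) * (JSrec p (j + 1) : ℂ) + (JSrec p j : ℂ) := by
      intro j
      rw [show JSrec (p + 1) (j + 1)
          = (((j + 1) * j : ℕ) : ℝ) * JSrec p (j + 1) + JSrec p j from rfl]
      push_cast; ring
    have expand : ∀ j ∈ Finset.range (p + 1),
        (JSrec (p + 1) (j + 1) : ℂ) * dprod μ (j + 1)
        = F (j + 1) + μ * ((JSrec p j : ℂ) * dprod μ j) - F j := by
      intro j _
      simp only [hF]
      rw [hstep, dprod_succ]
      push_cast
      ring
    have hshift : ∑ j ∈ Finset.range (p + 1), F (j + 1) = ∑ j ∈ Finset.range (p + 1), F j := by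
      have h1 := Finset.sum_range_succ' F (p + 1)
      have h2 := Finset.sum_range_succ F (p + 1)
      have hF0 : F 0 = 0 := by simp [hF]
      have hFp : F (p + 1) = 0 := by
        simp [hF, JSrec_eq_zero p (p + 1) (by omega)]
      rw [hF0, add_zero] at h1
      rw [hFp, add_zero] at h2
      rw [← h1, h2]
    rw [Finset.sum_range_succ']
    rw [Finset.sum_congr rfl expand]
    rw [show (JSrec (p + 1) 0 : ℂ) = 0 from by norm_num [JSrec]]
    rw [Finset.sum_sub_distrib, Finset.sum_add_distrib, hshift, ← Finset.mul_sum, ih]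
    ring

lemma js_eq : ∀ p j, j ≤ p → jacobiStirling p j = JSrec p j := by
  intro p
  induction p with
  | zero =>
    intro j hj
    interval_cases j
    rw [js_eq_zero_right, JSrec_zero_right]
  | succ p ih =>
    intro j hj
    match j with
    | 0 =>
      simp [js_eq_zero_right, JSrec_zero_right]
    | 1 =>
      rw [js_eq_one_right]
      show _ = (((0 + 1) * 0 : ℕ) : ℝ) * JSrec p (0 + 1) + JSrec p 0
      rw [JSrec_zero_right]
      rcases Nat.eq_zero_or_pos p with h | h
      · subst h; norm_num
      · rw [if_neg (by omega), if_neg (by omega)]; push_cast; ring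
    | (j' + 2) =>
      have hj2 : 2 ≤ j' + 2 := by omega
      have hp1 : 1 ≤ p := by omega
      rcases eq_or_lt_of_le hp1 with h1 | h2
      · -- p = 1, so j = 2
        have hp : p = 1 := h1.symm
        subst hp
        have hj' : j' = 0 := by omega
        subst hj'
        rw [js22]
        show (1:ℝ) = (((1 + 1) * 1 : ℕ) : ℝ) * JSrec 1 (1 + 1) + JSrec 1 1
        rw [JSrec_eq_zero 1 2 (by omega)]
        show (1:ℝ) = _ * 0 + ((((0 + 1) * 0 : ℕ) : ℝ) * JSrec 0 (0 + 1) + JSrec 0 0)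
        rw [JSrec_eq_zero 0 1 (by omega)]
        norm_num [JSrec]
      · have hp2 : 2 ≤ p := h2
        rw [js_rec p (j' + 2) hp2 hj2]
        have hrhs : JSrec (p + 1) (j' + 2)
            = (((j' + 2) * (j' + 1) : ℕ) : ℝ) * JSrec p (j' + 2) + JSrec p (j' + 1) := rfl
        rw [hrhs]
        have h1 : jacobiStirling p (j' + 2 - 1) = JSrec p (j' + 1) := by
          rw [show j' + 2 - 1 = j' + 1 from rfl]
          exact ih _ (by omega)
        rw [h1]
        have htc : tC (j' + 2) = (((j' + 2) * (j' + 1) : ℕ) : ℝ) := by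
          rw [tC_cast]; push_cast; ring
        rw [htc]
        congr 1
        congr 1
        rcases Nat.lt_or_ge p (j' + 2) with hlt | hge
        · have hjp : j' + 2 = p + 1 := by omega
          rw [hjp, js_vanish p hp2 (p + 1) (by omega), JSrec_eq_zero p (p + 1) (by omega)]
        · exact ih _ hge

lemma newton_trunc (q : ℕ) (μ : ℂ) (M : ℕ) (hq : q ≤ M) :
    ∑ j ∈ Finset.range (M + 1), (JSrec q j : ℂ) * dprod μ j = μ ^ q := by
  rw [← newton q μ]
  refine (Finset.sum_subset ?_ ?_).symm
  · intro x hx; rw [Finset.mem_range] at hx ⊢; omega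
  · intro x _ hx
    rw [Finset.mem_range] at hx
    rw [JSrec_eq_zero q x (by omega)]
    norm_num

lemma cLD_eq (n j : ℕ) (k : ℝ) (hj : j ≤ n) :
    cLD n j k = ∑ r ∈ Finset.range (n + 1), (n.choose r : ℝ) * JSrec (n - r) j * k ^ r := by
  rcases Nat.eq_zero_or_pos j with h0 | hpos
  · subst h0
    rw [cLD, if_pos rfl]
    rw [Finset.sum_eq_single n]
    · rw [Nat.choose_self, Nat.sub_self, show JSrec 0 0 = 1 from rfl]
      push_cast; ring
    · intro r hr hrn
      rw [Finset.mem_range] at hr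
      rw [JSrec_zero_right, if_neg (by omega)]
      ring
    · intro h; exact absurd (Finset.self_mem_range_succ n) h
  · rw [cLD, if_neg (by omega)]
    have hterm : ∀ r ∈ Finset.range (n - j + 1),
        (n.choose r : ℝ) * jacobiStirling (n - r) j * k ^ r
        = (n.choose r : ℝ) * JSrec (n - r) j * k ^ r := by
      intro r hr
      rw [Finset.mem_range] at hr
      rw [js_eq (n - r) j (by omega)]
    rw [Finset.sum_congr rfl hterm]
    refine Finset.sum_subset ?_ ?_
    · intro x hx; rw [Finset.mem_range] at hx ⊢; omega
    · intro x hx hnx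
      rw [Finset.mem_range] at hx hnx
      rw [JSrec_eq_zero (n - x) j (by omega)]
      ring

lemma cLD_sum (n : ℕ) (k : ℝ) (μ : ℂ) :
    ∑ j ∈ Finset.range (n + 1), (cLD n j k : ℂ) * dprod μ j = (μ + (k : ℂ)) ^ n := by
  have hc : ∀ j ∈ Finset.range (n + 1),
      (cLD n j k : ℂ) * dprod μ j =
      ∑ r ∈ Finset.range (n + 1),
        (n.choose r : ℂ) * (k : ℂ) ^ r * ((JSrec (n - r) j : ℂ) * dprod μ j) := by
    intro j hj
    rw [Finset.mem_range] at hj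
    rw [cLD_eq n j k (by omega)]
    push_cast
    rw [Finset.sum_mul]
    refine Finset.sum_congr rfl fun r _ => ?_
    ring
  rw [Finset.sum_congr rfl hc, Finset.sum_comm]
  have hinner : ∀ r ∈ Finset.range (n + 1),
      ∑ j ∈ Finset.range (n + 1),
        (n.choose r : ℂ) * (k : ℂ) ^ r * ((JSrec (n - r) j : ℂ) * dprod μ j)
      = (n.choose r : ℂ) * (k : ℂ) ^ r * μ ^ (n - r) := by
    intro r hr
    rw [← Finset.mul_sum, newton_trunc (n - r) μ n (by omega)]
  rw [Finset.sum_congr rfl hinner]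
  rw [add_comm μ (k : ℂ), add_pow]
  refine Finset.sum_congr rfl fun r _ => ?_
  ring

/-! ### analytic helpers -/

open Polynomial

lemma star_eval_real (p : Polynomial ℂ) (x : ℝ) :
    star (p.eval (x : ℂ)) = (p.map (starRingEnd ℂ)).eval (x : ℂ) := by
  calc star (p.eval (x:ℂ)) = (starRingEnd ℂ) (p.eval (x:ℂ)) := rfl
    _ = p.eval₂ (starRingEnd ℂ) ((starRingEnd ℂ) (x:ℂ)) := (Polynomial.eval₂_hom _ _).symm
    _ = (p.map (starRingEnd ℂ)).eval ((starRingEnd ℂ) (x:ℂ)) := by rw [Polynomial.eval_map]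
    _ = (p.map (starRingEnd ℂ)).eval (x:ℂ) := by rw [Complex.conj_ofReal]

lemma contPolyEval (H : Polynomial ℂ) : Continuous fun x : ℝ => H.eval (x : ℂ) :=
  H.continuous.comp Complex.continuous_ofReal

lemma intOnPolyEval (H : Polynomial ℂ) :
    MeasureTheory.IntegrableOn (fun x : ℝ => H.eval (x : ℂ)) (Ioo (-1 : ℝ) 1)
      MeasureTheory.volume :=
  ((contPolyEval H).integrableOn_Icc (a := -1) (b := 1)).mono_set Ioo_subset_Icc_self

lemma PI_deriv (H : Polynomial ℂ) :
    (∫ x in Ioo (-1 : ℝ) 1, (derivative H).eval (x : ℂ)) = H.eval 1 - H.eval (-1) := by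
  have hd : ∀ x ∈ uIcc (-1 : ℝ) 1,
      HasDerivAt (fun y : ℝ => H.eval (y : ℂ)) ((derivative H).eval (x : ℂ)) x :=
    fun x _ => (Polynomial.hasDerivAt H (x : ℂ)).comp_ofReal
  have hint : IntervalIntegrable (fun x : ℝ => (derivative H).eval (x : ℂ))
      MeasureTheory.volume (-1) 1 := (contPolyEval _).intervalIntegrable _ _
  have h := intervalIntegral.integral_eq_sub_of_hasDerivAt hd hint
  rw [intervalIntegral.integral_of_le (by norm_num : (-1 : ℝ) ≤ 1),
    MeasureTheory.integral_Ioc_eq_integral_Ioo] at h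
  rw [h]
  norm_num

lemma PI_add (F H : Polynomial ℂ) :
    (∫ x in Ioo (-1 : ℝ) 1, (F + H).eval (x : ℂ))
      = (∫ x in Ioo (-1 : ℝ) 1, F.eval (x : ℂ)) + ∫ x in Ioo (-1 : ℝ) 1, H.eval (x : ℂ) := by
  have h : ∀ x : ℝ, (F + H).eval (x : ℂ) = F.eval (x : ℂ) + H.eval (x : ℂ) := by
    intro x; rw [Polynomial.eval_add]
  rw [show (fun x : ℝ => (F + H).eval (x:ℂ))
      = fun x : ℝ => F.eval (x:ℂ) + H.eval (x:ℂ) from funext h]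
  exact MeasureTheory.integral_add (intOnPolyEval F) (intOnPolyEval H)

lemma PI_const_mul (a : ℂ) (F : Polynomial ℂ) :
    (∫ x in Ioo (-1 : ℝ) 1, (Polynomial.C a * F).eval (x : ℂ))
      = a * ∫ x in Ioo (-1 : ℝ) 1, F.eval (x : ℂ) := by
  have h : ∀ x : ℝ, (Polynomial.C a * F).eval (x : ℂ) = a * F.eval (x : ℂ) := by
    intro x; rw [Polynomial.eval_mul, Polynomial.eval_C]
  rw [show (fun x : ℝ => (Polynomial.C a * F).eval (x:ℂ))
      = fun x : ℝ => a • F.eval (x:ℂ) from funext h]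
  rw [MeasureTheory.integral_smul]
  rfl

lemma ode_iterate (P : Polynomial ℂ) (c : ℂ)
    (h : (1 - Polynomial.X ^ 2) * (derivative (derivative P)) = Polynomial.C c * P) :
    ∀ j : ℕ, (1 - Polynomial.X ^ 2) * (derivative^[j + 2] P)
      = Polynomial.C (2 * (j : ℂ)) * Polynomial.X * (derivative^[j + 1] P)
        + Polynomial.C ((j : ℂ) * ((j : ℂ) - 1) + c) * (derivative^[j] P) := by
  intro j
  induction j with
  | zero =>
    simp only [Nat.cast_zero]
    show (1 - X^2) * derivative (derivative P)
      = C (2*(0:ℂ)) * X * derivative P + C ((0:ℂ)*((0:ℂ)-1)+c) * P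
    rw [show (2*(0:ℂ)) = 0 by ring, show ((0:ℂ)*((0:ℂ)-1)+c) = c by ring, map_zero, h]
    ring
  | succ j ih =>
    have hd := congrArg derivative ih
    simp only [derivative_add, derivative_mul, derivative_sub, derivative_one, derivative_pow,
      derivative_X, derivative_C, Polynomial.derivative_natCast, Polynomial.derivative_ofNat,
      map_add, map_mul, map_sub, map_one, map_ofNat,
      Polynomial.C_eq_natCast, ← Function.iterate_succ_apply', Nat.succ_eq_add_one] at hd ⊢
    push_cast at hd ⊢
    rw [show j + 1 + 2 = j + 2 + 1 from rfl]
    linear_combination hd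

/-- Let `k > 0`, `n ∈ ℕ`, and for each `m ≥ 2` let `Q m` be a degree-`m` polynomial
eigenfunction, `-(1-x²)(Q m)'' + k·(Q m) = (m(m-1)+k)·(Q m)`, normalized in
`L²((-1,1); (1-x²)⁻¹ dx)`.  Then
`Σ_{j=0}^{n} c_j(n,k) ∫ (Q m)^{(j)} conj((Q l)^{(j)}) (1-x²)^{j-1} dx
  = (m(m-1)+k)ⁿ δ_{ml}`. -/
theorem jacobi_left_definite_orthogonality (k : ℝ) (hk : 0 < k) (n : ℕ) (hn : 1 ≤ n)
    (Q : ℕ → Polynomial ℂ)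
    (hdeg : ∀ m, 2 ≤ m → (Q m).natDegree = m)
    (heigen : ∀ m, 2 ≤ m →
      -(1 - Polynomial.X ^ 2) * Polynomial.derivative (Polynomial.derivative (Q m)) +
          Polynomial.C (k : ℂ) * Q m =
        Polynomial.C ((m : ℂ) * ((m : ℂ) - 1) + (k : ℂ)) * Q m)
    (hnorm : ∀ m, 2 ≤ m →
      ∫ x in Ioo (-1 : ℝ) 1, ‖(Q m).eval (x : ℂ)‖ ^ 2 * (1 - x ^ 2)⁻¹ = 1) :
    ∀ m l, 2 ≤ m → 2 ≤ l →
      ∑ j ∈ Finset.range (n + 1),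
        (cLD n j k : ℂ) * ∫ x in Ioo (-1 : ℝ) 1,
          (Polynomial.derivative^[j] (Q m)).eval (x : ℂ) *
            star ((Polynomial.derivative^[j] (Q l)).eval (x : ℂ)) *
            ((1 - x ^ 2 : ℝ) : ℂ) ^ ((j : ℤ) - 1) =
      if m = l then (((m : ℂ) * ((m : ℂ) - 1) + (k : ℂ)) ^ n) else 0 := by
  intro m l hm hl
  classical
  -- clean form of the ODE
  have ode : ∀ i, 2 ≤ i → (1 - Polynomial.X ^ 2) *
      (Polynomial.derivative (Polynomial.derivative (Q i)))
      = Polynomial.C (-((i:ℂ) * ((i:ℂ) - 1))) * Q i := by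
    intro i hi
    have h := heigen i hi
    rw [map_add] at h
    rw [map_neg]
    linear_combination -h
  have eig_ne : ∀ i : ℕ, 2 ≤ i → ((i:ℂ) * ((i:ℂ) - 1)) ≠ 0 := by
    intro i hi
    have h1 : (i:ℂ) ≠ 0 := Nat.cast_ne_zero.2 (by omega)
    have h2 : (i:ℂ) - 1 ≠ 0 := by
      rw [sub_ne_zero]
      intro h
      have : i = 1 := by exact_mod_cast h
      omega
    exact mul_ne_zero h1 h2
  have root1 : ∀ i, 2 ≤ i → (Q i).eval 1 = 0 := by
    intro i hi
    have h := congrArg (Polynomial.eval (1:ℂ)) (ode i hi)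
    simp only [Polynomial.eval_mul, Polynomial.eval_sub, Polynomial.eval_one,
      Polynomial.eval_pow, Polynomial.eval_X, Polynomial.eval_C, one_pow, sub_self,
      zero_mul, neg_mul] at h
    have h2 : ((i:ℂ) * ((i:ℂ) - 1)) * (Q i).eval 1 = 0 := by linear_combination h
    exact (mul_eq_zero.1 h2).resolve_left (eig_ne i hi)
  have rootm1 : ∀ i, 2 ≤ i → (Q i).eval (-1) = 0 := by
    intro i hi
    have h := congrArg (Polynomial.eval (-1:ℂ)) (ode i hi)
    simp only [Polynomial.eval_mul, Polynomial.eval_sub, Polynomial.eval_one,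
      Polynomial.eval_pow, Polynomial.eval_X, Polynomial.eval_C, neg_mul] at h
    have h2 : ((i:ℂ) * ((i:ℂ) - 1)) * (Q i).eval (-1) = 0 := by linear_combination h
    exact (mul_eq_zero.1 h2).resolve_left (eig_ne i hi)
  have factor : ∀ i, 2 ≤ i → ∃ R, Q i = (1 - Polynomial.X ^ 2) * R := by
    intro i hi
    obtain ⟨Q1, hQ1⟩ := Polynomial.dvd_iff_isRoot.2 (root1 i hi)
    have h2' : Q1.eval (-1) = 0 := by
      have h := rootm1 i hi
      rw [hQ1] at h
      simp only [Polynomial.eval_mul, Polynomial.eval_sub, Polynomial.eval_X,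
        Polynomial.eval_C] at h
      have hne : (-1 - 1 : ℂ) ≠ 0 := by norm_num
      exact (mul_eq_zero.1 h).resolve_left hne
    obtain ⟨R, hR⟩ := Polynomial.dvd_iff_isRoot.2 h2'
    refine ⟨-R, ?_⟩
    rw [hQ1, hR, map_neg, map_one]
    ring
  obtain ⟨Rm, hRm⟩ := factor m hm
  obtain ⟨Rl, hRl⟩ := factor l hl
  set μ : ℂ := (m:ℂ) * ((m:ℂ) - 1) with hμ
  set ν : ℂ := (l:ℂ) * ((l:ℂ) - 1) with hν
  set Qlc : Polynomial ℂ := (Q l).map (starRingEnd ℂ) with hQlc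
  set Rlc : Polynomial ℂ := Rl.map (starRingEnd ℂ) with hRlcdef
  have hMap1X : ((1 : Polynomial ℂ) - Polynomial.X ^ 2).map (starRingEnd ℂ)
      = 1 - Polynomial.X ^ 2 := by
    simp [Polynomial.map_sub, Polynomial.map_pow]
  have hRlc : Qlc = (1 - Polynomial.X ^ 2) * Rlc := by
    rw [hQlc, hRl, Polynomial.map_mul, hMap1X]
  have ode_lc : (1 - Polynomial.X ^ 2) * (Polynomial.derivative (Polynomial.derivative Qlc))
      = Polynomial.C (-ν) * Qlc := by
    have h := congrArg (Polynomial.map (starRingEnd ℂ)) (ode l hl)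
    rw [Polynomial.map_mul, Polynomial.map_mul, hMap1X, Polynomial.map_C] at h
    have hconj : (starRingEnd ℂ) (-((l:ℂ) * ((l:ℂ) - 1))) = -ν := by
      rw [hν]
      simp [map_neg, map_mul, map_sub, map_one, Complex.conj_natCast]
    rw [hconj, ← Polynomial.derivative_map, ← Polynomial.derivative_map] at h
    exact h
  have hpoly_ne : ((1 : Polynomial ℂ) - Polynomial.X ^ 2) ≠ 0 := by
    intro h
    have := congrArg (Polynomial.eval (0:ℂ)) h
    simp at this
  have hDDm : Polynomial.derivative (Polynomial.derivative (Q m))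
      = Polynomial.C (-μ) * Rm := by
    apply mul_left_cancel₀ hpoly_ne
    rw [ode m hm, hRm, hμ]
    ring
  have hDDlc : Polynomial.derivative (Polynomial.derivative Qlc)
      = Polynomial.C (-ν) * Rlc := by
    apply mul_left_cancel₀ hpoly_ne
    rw [ode_lc, hRlc]
    ring
  have odeIter := ode_iterate (Q m) (-μ) (by rw [ode m hm, hμ])
  -- boundary values
  have hQm1 : (Q m).eval 1 = 0 := root1 m hm
  have hQmm1 : (Q m).eval (-1) = 0 := rootm1 m hm
  have hQlc1 : Qlc.eval 1 = 0 := by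
    rw [hRlc, Polynomial.eval_mul]
    norm_num
  have hQlcm1 : Qlc.eval (-1) = 0 := by
    rw [hRlc, Polynomial.eval_mul]
    norm_num
  -- the polynomial family G and the integrals I
  set G : ℕ → Polynomial ℂ := fun j => if j = 0 then Rm * Qlc
    else (Polynomial.derivative^[j] (Q m)) * (Polynomial.derivative^[j] Qlc)
      * (1 - Polynomial.X ^ 2) ^ (j - 1) with hGdef
  set I : ℕ → ℂ := fun j => ∫ x in Ioo (-1:ℝ) 1, (G j).eval (x:ℂ) with hIdef
  have hG0 : G 0 = Rm * Qlc := by simp [hGdef]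
  have hGS : ∀ i : ℕ, G (i+1) = (Polynomial.derivative^[i+1] (Q m))
      * (Polynomial.derivative^[i+1] Qlc) * (1 - Polynomial.X ^ 2) ^ i := by
    intro i
    simp [hGdef]
  -- generic IBP step
  have key : ∀ (j : ℕ) (a : ℂ) (H : Polynomial ℂ),
      G (j+1) = Polynomial.derivative H + Polynomial.C a * G j →
      H.eval 1 = 0 → H.eval (-1) = 0 → I (j+1) = a * I j := by
    intro j a H hid h1 h2
    have e1 : I (j+1) = ∫ x in Ioo (-1:ℝ) 1, (G (j+1)).eval (x:ℂ) := by simp only [hIdef]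
    have e2 : I j = ∫ x in Ioo (-1:ℝ) 1, (G j).eval (x:ℂ) := by simp only [hIdef]
    rw [e1, e2, hid, PI_add, PI_deriv, h1, h2, PI_const_mul]
    ring
  have hrec0 : I 1 = μ * I 0 := by
    apply key 0 μ (Polynomial.derivative (Q m) * Qlc)
    · rw [hG0, hGS 0]
      simp only [show (0:ℕ)+1 = 1 from rfl, Function.iterate_one, pow_zero, mul_one]
      rw [Polynomial.derivative_mul, hDDm, map_neg]
      ring
    · rw [Polynomial.eval_mul, hQlc1, mul_zero]
    · rw [Polynomial.eval_mul, hQlcm1, mul_zero]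
  have hsym : I 1 = ν * I 0 := by
    apply key 0 ν (Q m * Polynomial.derivative Qlc)
    · rw [hG0, hGS 0]
      simp only [show (0:ℕ)+1 = 1 from rfl, Function.iterate_one, pow_zero, mul_one]
      rw [Polynomial.derivative_mul, hDDlc, map_neg, hRm, hRlc]
      ring
    · rw [Polynomial.eval_mul, hQm1, zero_mul]
    · rw [Polynomial.eval_mul, hQmm1, zero_mul]
  have hrecS : ∀ i : ℕ, I (i+1+1) = (μ - ((i:ℂ)+1) * (((i:ℂ)+1) - 1)) * I (i+1) := by
    intro i
    apply key (i+1) _ ((1 - Polynomial.X^2)^(i+1) * (Polynomial.derivative^[i+2] (Q m))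
      * (Polynomial.derivative^[i+1] Qlc))
    · have hOde := odeIter (i+1)
      rw [show (i:ℕ)+1+1 = (i+1)+1 from rfl, hGS (i+1), hGS i]
      simp only [Polynomial.derivative_mul, Polynomial.derivative_pow, Polynomial.derivative_sub,
        Polynomial.derivative_one, Polynomial.derivative_X, Polynomial.derivative_C,
        Polynomial.derivative_natCast, ← Function.iterate_succ_apply', Nat.succ_eq_add_one,
        Polynomial.C_eq_natCast]
      simp only [map_add, map_mul, map_sub, map_one, map_ofNat, map_neg,
        Polynomial.C_eq_natCast] at hOde ⊢
      push_cast at hOde ⊢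
      rw [show i+1+2 = i+2+1 from rfl] at hOde
      linear_combination (-((1 - Polynomial.X^2)^i * (Polynomial.derivative^[i+1] Qlc))) * hOde
    · simp only [Polynomial.eval_mul, Polynomial.eval_pow, Polynomial.eval_sub,
        Polynomial.eval_one, Polynomial.eval_X]
      norm_num
    · simp only [Polynomial.eval_mul, Polynomial.eval_pow, Polynomial.eval_sub,
        Polynomial.eval_one, Polynomial.eval_X]
      norm_num
  have hrec : ∀ j : ℕ, I (j+1) = (μ - (j:ℂ) * ((j:ℂ) - 1)) * I j := by
    intro j
    cases j with
    | zero => simpa using hrec0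
    | succ i =>
      push_cast
      exact hrecS i
  have hIj : ∀ j, I j = dprod μ j * I 0 := by
    intro j
    induction j with
    | zero => rw [dprod]; simp
    | succ j ih => rw [hrec j, ih, dprod_succ]; ring
  -- value of I 0
  have hμνne : m ≠ l → μ - ν ≠ 0 := by
    intro hml
    have hμcast : μ = ((m*(m-1) : ℕ) : ℂ) := by
      rw [hμ]; push_cast [Nat.cast_sub (show 1 ≤ m by omega)]; ring
    have hνcast : ν = ((l*(l-1) : ℕ) : ℂ) := by
      rw [hν]; push_cast [Nat.cast_sub (show 1 ≤ l by omega)]; ring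
    have hnat : m*(m-1) ≠ l*(l-1) := by
      rcases Nat.lt_or_ge m l with h | h
      · have h1 : m - 1 < l - 1 := by omega
        have : m*(m-1) < l*(l-1) := Nat.mul_lt_mul'' h h1
        omega
      · have hlm : l < m := by omega
        have h1 : l - 1 < m - 1 := by omega
        have : l*(l-1) < m*(m-1) := Nat.mul_lt_mul'' hlm h1
        omega
    rw [sub_ne_zero, hμcast, hνcast]
    exact_mod_cast hnat
  have hI0 : I 0 = if m = l then 1 else 0 := by
    by_cases hml : m = l
    · subst hml
      rw [if_pos rfl]
      have hcongr : I 0 = ∫ x in Ioo (-1:ℝ) 1, ((‖(Q m).eval (x:ℂ)‖^2 * (1 - x^2)⁻¹ : ℝ) : ℂ) := by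
        have e0 : I 0 = ∫ x in Ioo (-1:ℝ) 1, (G 0).eval (x:ℂ) := by simp only [hIdef]
        rw [e0]
        apply MeasureTheory.setIntegral_congr_fun measurableSet_Ioo
        intro x hx
        dsimp only
        rw [hG0]
        obtain ⟨hx1, hx2⟩ := hx
        have hpos : (0:ℝ) < 1 - x^2 := by nlinarith
        have hcast : ((1 - x^2 : ℝ) : ℂ) = 1 - (x:ℂ)^2 := by push_cast; ring
        have hne : (1 : ℂ) - (x:ℂ)^2 ≠ 0 := by
          rw [← hcast]
          exact_mod_cast hpos.ne'
        have hQmx : (Q m).eval (x:ℂ) = (1 - (x:ℂ)^2) * Rm.eval (x:ℂ) := by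
          rw [hRm]
          simp [Polynomial.eval_mul]
        have hQlcx : Qlc.eval (x:ℂ) = star ((Q m).eval (x:ℂ)) := (star_eval_real _ x).symm
        have hmc : ((Q m).eval (x:ℂ)) * star ((Q m).eval (x:ℂ))
            = ((‖(Q m).eval (x:ℂ)‖^2 : ℝ) : ℂ) := by
          rw [show ‖(Q m).eval (x:ℂ)‖^2 = Complex.normSq ((Q m).eval (x:ℂ)) by
            rw [Complex.sq_norm]]
          exact Complex.mul_conj _
        rw [Polynomial.eval_mul, hQlcx]
        apply mul_left_cancel₀ hne
        rw [show (1 - (x:ℂ)^2) * (Rm.eval (x:ℂ) * star ((Q m).eval (x:ℂ)))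
            = ((Q m).eval (x:ℂ)) * star ((Q m).eval (x:ℂ)) by rw [hQmx]; ring]
        rw [hmc, ← hcast, ← Complex.ofReal_mul]
        congr 1
        field_simp
      rw [hcongr,
        show (∫ x in Ioo (-1:ℝ) 1, ((‖(Q m).eval (x:ℂ)‖^2 * (1 - x^2)⁻¹ : ℝ) : ℂ))
          = ((∫ x in Ioo (-1:ℝ) 1, ‖(Q m).eval (x:ℂ)‖^2 * (1 - x^2)⁻¹ : ℝ) : ℂ)
          from integral_ofReal, hnorm m hm, Complex.ofReal_one]
    · rw [if_neg hml]
      have h1 : (μ - ν) * I 0 = 0 := by linear_combination hsym - hrec0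
      exact (mul_eq_zero.1 h1).resolve_left (hμνne hml)
  -- identify the integrals in the statement with I j
  have hint_eq : ∀ j, (∫ x in Ioo (-1:ℝ) 1,
      (Polynomial.derivative^[j] (Q m)).eval (x:ℂ) *
        star ((Polynomial.derivative^[j] (Q l)).eval (x:ℂ)) *
        ((1 - x^2 : ℝ):ℂ) ^ ((j:ℤ) - 1)) = I j := by
    intro j
    have hIval : I j = ∫ x in Ioo (-1:ℝ) 1, (G j).eval (x:ℂ) := by
      simp only [hIdef]
    rw [hIval]
    apply MeasureTheory.setIntegral_congr_fun measurableSet_Ioo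
    intro x hx
    dsimp only
    obtain ⟨hx1, hx2⟩ := hx
    have hpos : (0:ℝ) < 1 - x^2 := by nlinarith
    have hcast : ((1 - x^2 : ℝ) : ℂ) = 1 - (x:ℂ)^2 := by push_cast; ring
    have hne : ((1 - x^2:ℝ):ℂ) ≠ 0 := by exact_mod_cast hpos.ne'
    have hstar : star ((Polynomial.derivative^[j] (Q l)).eval (x:ℂ))
        = (Polynomial.derivative^[j] Qlc).eval (x:ℂ) := by
      rw [star_eval_real, ← Polynomial.iterate_derivative_map, ← hQlc]
    rcases Nat.eq_zero_or_pos j with rfl | hj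
    · simp only [Function.iterate_zero, id_eq] at hstar ⊢
      rw [hstar, hG0]
      have hQmx : (Q m).eval (x:ℂ) = ((1 - x^2:ℝ):ℂ) * Rm.eval (x:ℂ) := by
        rw [hRm, Polynomial.eval_mul, hcast]
        simp
      rw [Polynomial.eval_mul, hQmx]
      rw [show (((0:ℕ):ℤ) - 1) = -(1:ℤ) from by norm_num, zpow_neg, zpow_one]
      have hne2 : (1:ℂ) - (x:ℂ)^2 ≠ 0 := by rw [← hcast]; exact hne
      rw [hcast]
      field_simp
    · obtain ⟨i, rfl⟩ : ∃ i, j = i + 1 := ⟨j - 1, by omega⟩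
      rw [hstar, hGS i]
      rw [show (((i+1:ℕ):ℤ) - 1) = (i:ℤ) from by push_cast; ring, zpow_natCast]
      simp only [Polynomial.eval_mul, Polynomial.eval_pow, Polynomial.eval_sub,
        Polynomial.eval_one, Polynomial.eval_X, hcast]
  -- final assembly
  have hterm : ∀ j ∈ Finset.range (n+1),
      (cLD n j k : ℂ) * (∫ x in Ioo (-1:ℝ) 1,
        (Polynomial.derivative^[j] (Q m)).eval (x:ℂ) *
          star ((Polynomial.derivative^[j] (Q l)).eval (x:ℂ)) *
          ((1 - x^2 : ℝ):ℂ) ^ ((j:ℤ) - 1))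
      = ((cLD n j k : ℂ) * dprod μ j) * I 0 := by
    intro j _
    rw [hint_eq j, hIj j]
    ring
  rw [Finset.sum_congr rfl hterm, ← Finset.sum_mul, cLD_sum n k μ, hI0]
  by_cases hml : m = l
  · rw [if_pos hml, if_pos hml, mul_one]
  · rw [if_neg hml, if_neg hml, mul_zero]
end

section
/- The sets W₁ and V₁ coincide: a function f belongs to W₁ = {f : f ∈ AC[-1,1], f' ∈ L²(-1,1), f(1) = f(-1) = 0} if and only if f (restricted to (-1,1)) belongs to V₁ = {f:(-1,1)→ℂ : f ∈ AC_loc(-1,1), f ∈ L²((-1,1);(1-x²)^{-1}dx), f' ∈ L²(-1,1)}. -/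
open MeasureTheory Set

/-- Membership in `W₁ = {f : f ∈ AC[-1,1], f' ∈ L²(-1,1), f(1) = f(-1) = 0}`,
encoded via the derivative function `f'`. -/
def InW1 (f f' : ℝ → ℂ) : Prop :=
  (∀ x ∈ Icc (-1 : ℝ) 1, ∀ y ∈ Icc (-1 : ℝ) 1, f y - f x = ∫ t in x..y, f' t) ∧
  IntervalIntegrable f' volume (-1) 1 ∧
  IntegrableOn (fun x => ‖f' x‖ ^ 2) (Ioo (-1 : ℝ) 1) ∧
  f 1 = 0 ∧ f (-1) = 0

/-- Membership in
`V₁ = {f : (-1,1) → ℂ | f ∈ AC_loc(-1,1), f ∈ L²((-1,1);(1-x²)⁻¹dx), f' ∈ L²(-1,1)}`,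
encoded via the derivative function `f'`. -/
def InV1 (f f' : ℝ → ℂ) : Prop :=
  (∀ x ∈ Ioo (-1 : ℝ) 1, ∀ y ∈ Ioo (-1 : ℝ) 1, IntervalIntegrable f' volume x y) ∧
  (∀ x ∈ Ioo (-1 : ℝ) 1, ∀ y ∈ Ioo (-1 : ℝ) 1, f y - f x = ∫ t in x..y, f' t) ∧
  IntegrableOn (fun x => ‖f x‖ ^ 2 * (1 - x ^ 2)⁻¹) (Ioo (-1 : ℝ) 1) ∧
  IntegrableOn (fun x => ‖f' x‖ ^ 2) (Ioo (-1 : ℝ) 1)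


lemma cs_bound (h : ℝ → ℂ) (a b : ℝ) (hab : a ≤ b) (B : ℝ) (hB : 0 < B)
    (hi : IntervalIntegrable h volume a b)
    (hsq : IntervalIntegrable (fun t => ‖h t‖ ^ 2) volume a b)
    (hIB : (∫ t in a..b, ‖h t‖ ^ 2) ≤ B) :
    ‖∫ t in a..b, h t‖ ^ 2 ≤ B * (b - a) := by
  rcases eq_or_lt_of_le hab with rfl | hlt
  · simp
  have hba : 0 < b - a := by linarith
  set ε := Real.sqrt ((b - a) / B) with hεdef
  have hεpos : 0 < ε := Real.sqrt_pos.2 (div_pos hba hB)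
  set s := Real.sqrt (B * (b - a)) with hsdef
  have hs2 : s ^ 2 = B * (b - a) := Real.sq_sqrt (by positivity)
  have hε2 : ε ^ 2 = (b - a) / B := Real.sq_sqrt (by positivity)
  have key : ‖∫ t in a..b, h t‖ ≤ s := by
    have step1 : ‖∫ t in a..b, h t‖ ≤ ∫ t in a..b, ‖h t‖ :=
      intervalIntegral.norm_integral_le_integral_norm hab
    have step2 : (∫ t in a..b, ‖h t‖) ≤ ∫ t in a..b, (ε / 2 * ‖h t‖ ^ 2 + 1 / (2 * ε)) := by
      apply intervalIntegral.integral_mono_on hab hi.norm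
        ((hsq.const_mul _).add intervalIntegrable_const)
      intro t _
      have h1 : 2 * ε * ‖h t‖ ≤ ε ^ 2 * ‖h t‖ ^ 2 + 1 := by
        nlinarith [sq_nonneg (ε * ‖h t‖ - 1)]
      rw [← sub_nonneg]
      have : ε / 2 * ‖h t‖ ^ 2 + 1 / (2 * ε) - ‖h t‖
          = (ε ^ 2 * ‖h t‖ ^ 2 + 1 - 2 * ε * ‖h t‖) / (2 * ε) := by
        field_simp
      rw [this]
      apply div_nonneg (by linarith) (by positivity)
    have step3 : (∫ t in a..b, (ε / 2 * ‖h t‖ ^ 2 + 1 / (2 * ε)))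
        = ε / 2 * (∫ t in a..b, ‖h t‖ ^ 2) + (b - a) * (1 / (2 * ε)) := by
      rw [intervalIntegral.integral_add (hsq.const_mul _) intervalIntegrable_const,
        intervalIntegral.integral_const_mul, intervalIntegral.integral_const, smul_eq_mul]
    have hεB : ε * B = s := by
      have : (ε * B) ^ 2 = s ^ 2 := by
        rw [hs2, mul_pow, hε2]; field_simp
      have h1 : 0 ≤ ε * B := by positivity
      nlinarith [Real.sqrt_nonneg (B * (b - a))]
    have hbaε : (b - a) / ε = s := by
      have : ((b - a) / ε) ^ 2 = s ^ 2 := by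
        rw [hs2, div_pow, hε2]; field_simp
      have h1 : 0 ≤ (b - a) / ε := by positivity
      nlinarith [Real.sqrt_nonneg (B * (b - a))]
    calc ‖∫ t in a..b, h t‖ ≤ ε / 2 * (∫ t in a..b, ‖h t‖ ^ 2) + (b - a) * (1 / (2 * ε)) := by
          rw [← step3]; exact le_trans step1 step2
      _ ≤ ε / 2 * B + (b - a) * (1 / (2 * ε)) := by
          gcongr
      _ = (ε * B) / 2 + ((b - a) / ε) / 2 := by ring
      _ = s := by rw [hεB, hbaε]; ring
  calc ‖∫ t in a..b, h t‖ ^ 2 ≤ s ^ 2 := by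
        gcongr
    _ = B * (b - a) := hs2


lemma not_int_right (a : ℝ) (ha : a < 1) :
    ¬ IntegrableOn (fun x : ℝ => (1 - x)⁻¹) (Ioo a 1) volume := by
  intro h
  have h2 : IntegrableOn (fun x : ℝ => (x - 1)⁻¹) (Ioo a 1) volume := by
    have := h.neg
    have e : (-fun x : ℝ => (1 - x)⁻¹) = (fun x : ℝ => (x - 1)⁻¹) := by
      funext x; show -(1 - x)⁻¹ = (x - 1)⁻¹; rw [neg_inv, neg_sub]
    rwa [e] at this
  have h3 : IntervalIntegrable (fun x : ℝ => (x - 1)⁻¹) volume a 1 :=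
    (intervalIntegrable_iff_integrableOn_Ioo_of_le ha.le).2 h2
  rw [intervalIntegrable_sub_inv_iff] at h3
  rcases h3 with h3 | h3
  · linarith
  · exact h3 (right_mem_uIcc)

lemma not_int_left (b : ℝ) (hb : -1 < b) :
    ¬ IntegrableOn (fun x : ℝ => (1 + x)⁻¹) (Ioo (-1) b) volume := by
  intro h
  have h2 : IntegrableOn (fun x : ℝ => (x - (-1))⁻¹) (Ioo (-1) b) volume := by
    have e : (fun x : ℝ => (1 + x)⁻¹) = (fun x : ℝ => (x - (-1))⁻¹) := by
      funext x; ring_nf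
    rwa [e] at h
  have h3 : IntervalIntegrable (fun x : ℝ => (x - (-1))⁻¹) volume (-1) b :=
    (intervalIntegrable_iff_integrableOn_Ioo_of_le hb.le).2 h2
  rw [intervalIntegrable_sub_inv_iff] at h3
  rcases h3 with h3 | h3
  · linarith
  · exact h3 (left_mem_uIcc)

lemma dir1 (f f' : ℝ → ℂ) (hw : InW1 f f') : InV1 f f' := by
  obtain ⟨hFTC, hint, hsq, hf1, hfm1⟩ := hw
  have huIcc : uIcc (-1:ℝ) 1 = Icc (-1:ℝ) 1 := uIcc_of_le (by norm_num)
  have hsub : ∀ x ∈ Icc (-1:ℝ) 1, ∀ y ∈ Icc (-1:ℝ) 1, IntervalIntegrable f' volume x y := by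
    intro x hx y hy
    exact hint.mono_set (by rw [huIcc]; exact uIcc_subset_Icc hx hy)
  set A := ∫ t in Ioo (-1:ℝ) 1, ‖f' t‖ ^ 2 with hAdef
  have hA : 0 ≤ A := setIntegral_nonneg measurableSet_Ioo (fun t _ => by positivity)
  set B := 1 + A with hBdef
  have hBpos : 0 < B := by linarith
  have hsqsub : ∀ x y : ℝ, -1 ≤ x → y ≤ 1 → x ≤ y →
      IntervalIntegrable (fun t => ‖f' t‖ ^ 2) volume x y := by
    intro x y hx hy hxy
    exact (intervalIntegrable_iff_integrableOn_Ioo_of_le hxy).2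
      (hsq.mono_set (Ioo_subset_Ioo hx hy))
  have hsqle : ∀ x y : ℝ, -1 ≤ x → y ≤ 1 → x ≤ y →
      (∫ t in x..y, ‖f' t‖ ^ 2) ≤ B := by
    intro x y hx hy hxy
    have h1 : (∫ t in x..y, ‖f' t‖ ^ 2) = ∫ t in Ioo x y, ‖f' t‖ ^ 2 := by
      rw [intervalIntegral.integral_of_le hxy,
        ← Measure.restrict_congr_set Ioo_ae_eq_Ioc]
    rw [h1]
    have h2 : (∫ t in Ioo x y, ‖f' t‖ ^ 2) ≤ A :=
      setIntegral_mono_set hsq (Filter.Eventually.of_forall fun t => by positivity)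
        (HasSubset.Subset.eventuallyLE (Ioo_subset_Ioo hx hy))
    linarith
  have hbR : ∀ x ∈ Ioo (-1:ℝ) 1, ‖f x‖ ^ 2 ≤ B * (1 - x) := by
    intro x hx
    have h0 := hFTC x (Ioo_subset_Icc_self hx) 1 (by norm_num)
    rw [hf1, zero_sub] at h0
    have hfx : ‖f x‖ = ‖∫ t in x..1, f' t‖ := by rw [← h0, norm_neg]
    rw [hfx]
    exact cs_bound f' x 1 hx.2.le B hBpos
      (hsub x (Ioo_subset_Icc_self hx) 1 (by norm_num))
      (hsqsub x 1 hx.1.le le_rfl hx.2.le)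
      (hsqle x 1 hx.1.le le_rfl hx.2.le)
  have hbL : ∀ x ∈ Ioo (-1:ℝ) 1, ‖f x‖ ^ 2 ≤ B * (x - (-1)) := by
    intro x hx
    have h0 := hFTC (-1) (by norm_num) x (Ioo_subset_Icc_self hx)
    rw [hfm1, sub_zero] at h0
    rw [h0]
    exact cs_bound f' (-1) x (by linarith [hx.1]) B hBpos
      (hsub (-1) (by norm_num) x (Ioo_subset_Icc_self hx))
      (hsqsub (-1) x le_rfl hx.2.le hx.1.le)
      (hsqle (-1) x le_rfl hx.2.le hx.1.le)
  have hcont : ContinuousOn (fun y => ∫ t in (-1:ℝ)..y, f' t) (Icc (-1:ℝ) 1) := by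
    have := intervalIntegral.continuousOn_primitive_interval' hint left_mem_uIcc
    rwa [huIcc] at this
  have hfeq : ∀ y ∈ Icc (-1:ℝ) 1, f y = f (-1) + ∫ t in (-1:ℝ)..y, f' t := by
    intro y hy
    have h0 := hFTC (-1) (by norm_num) y hy
    rw [hfm1, sub_zero] at h0
    rw [← h0, hfm1, zero_add]
  have hfm : AEStronglyMeasurable f (volume.restrict (Ioo (-1:ℝ) 1)) := by
    have hgm : AEStronglyMeasurable (fun y => f (-1) + ∫ t in (-1:ℝ)..y, f' t)
        (volume.restrict (Ioo (-1:ℝ) 1)) :=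
      ((continuousOn_const.add hcont).mono Ioo_subset_Icc_self).aestronglyMeasurable
        measurableSet_Ioo
    apply hgm.congr
    rw [Filter.EventuallyEq, ae_restrict_iff' measurableSet_Ioo]
    exact Filter.Eventually.of_forall fun y hy => (hfeq y (Ioo_subset_Icc_self hy)).symm
  have hmeas : AEStronglyMeasurable (fun x => ‖f x‖ ^ 2 * (1 - x ^ 2)⁻¹)
      (volume.restrict (Ioo (-1:ℝ) 1)) := by
    apply AEStronglyMeasurable.mul
    · exact (hfm.norm.aemeasurable.pow_const 2).aestronglyMeasurable
    · exact ((measurable_const.sub (measurable_id.pow_const 2)).inv).aestronglyMeasurable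
  have hbound : ∀ x ∈ Ioo (-1:ℝ) 1, ‖f x‖ ^ 2 * (1 - x ^ 2)⁻¹ ≤ B := by
    intro x hx
    have h1x : 0 < 1 - x := by linarith [hx.2]
    have h2x : 0 < 1 + x := by linarith [hx.1]
    have hpos : 0 < 1 - x ^ 2 := by nlinarith
    rcases le_or_gt 0 x with hx0 | hx0
    · have hle : 1 - x ≤ 1 - x ^ 2 := by nlinarith
      calc ‖f x‖ ^ 2 * (1 - x ^ 2)⁻¹ ≤ (B * (1 - x)) * (1 - x)⁻¹ :=
            mul_le_mul (hbR x hx) (inv_anti₀ h1x hle) (inv_nonneg.2 hpos.le) (by nlinarith)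
        _ = B := by field_simp
    · have hle : 1 + x ≤ 1 - x ^ 2 := by nlinarith
      calc ‖f x‖ ^ 2 * (1 - x ^ 2)⁻¹ ≤ (B * (x - (-1))) * (1 + x)⁻¹ :=
            mul_le_mul (hbL x hx) (inv_anti₀ h2x hle) (inv_nonneg.2 hpos.le) (by nlinarith)
        _ = B := by rw [show x - (-1) = 1 + x by ring]; field_simp
  have hL2 : IntegrableOn (fun x => ‖f x‖ ^ 2 * (1 - x ^ 2)⁻¹) (Ioo (-1:ℝ) 1) volume := by
    apply Integrable.mono' (g := fun _ : ℝ => B) (integrableOn_const measure_Ioo_lt_top.ne) hmeas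
    rw [ae_restrict_iff' measurableSet_Ioo]
    refine Filter.Eventually.of_forall fun x hx => ?_
    have hpos : 0 < 1 - x ^ 2 := by nlinarith [hx.1, hx.2]
    rw [Real.norm_eq_abs, abs_of_nonneg (mul_nonneg (by positivity) (inv_nonneg.2 hpos.le))]
    exact hbound x hx
  exact ⟨fun x hx y hy => hsub x (Ioo_subset_Icc_self hx) y (Ioo_subset_Icc_self hy),
    fun x hx y hy => hFTC x (Ioo_subset_Icc_self hx) y (Ioo_subset_Icc_self hy),
    hL2, hsq⟩

lemma dir2 (f f' : ℝ → ℂ) (hv : InV1 f f') :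
    ∃ g : ℝ → ℂ, (∀ x ∈ Ioo (-1 : ℝ) 1, g x = f x) ∧ InW1 g f' := by
  obtain ⟨hii, hFTC, hL2, hsq⟩ := hv
  -- measurability of f' on Ioo (-1) 1
  have hmeas : AEStronglyMeasurable f' (volume.restrict (Ioo (-1:ℝ) 1)) := by
    have hcover : Ioo (-1:ℝ) 1
        = ⋃ n : ℕ, Ioc (-(1 - ((n:ℝ) + 1)⁻¹)) (1 - ((n:ℝ) + 1)⁻¹) := by
      ext x
      simp only [mem_Ioo, mem_iUnion, mem_Ioc]
      constructor
      · rintro ⟨h1, h2⟩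
        obtain ⟨n, hn⟩ := exists_nat_one_div_lt
          (lt_min (by linarith) (by linarith) : (0:ℝ) < min (1 - x) (1 + x))
        have hn1 : (1:ℝ) / (n + 1) < 1 - x := lt_of_lt_of_le hn (min_le_left _ _)
        have hn2 : (1:ℝ) / (n + 1) < 1 + x := lt_of_lt_of_le hn (min_le_right _ _)
        have hc : ((n:ℝ) + 1)⁻¹ = 1 / (n + 1) := by rw [one_div]
        exact ⟨n, by rw [hc]; linarith, by rw [hc]; linarith⟩
      · rintro ⟨n, hn1, hn2⟩
        have hpos : (0:ℝ) < ((n:ℝ) + 1)⁻¹ := by positivity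
        constructor <;> linarith
    rw [hcover, aestronglyMeasurable_iUnion_iff]
    intro n
    have hpos : (0:ℝ) < ((n:ℝ) + 1)⁻¹ := by positivity
    have hle : (((n:ℝ) + 1)⁻¹ : ℝ) ≤ 1 := by
      rw [inv_le_one_iff₀]; right; linarith [Nat.cast_nonneg (α := ℝ) n]
    have h1 : (-(1 - ((n:ℝ) + 1)⁻¹)) ∈ Ioo (-1:ℝ) 1 := by
      constructor <;> simp only [neg_lt, neg_lt_neg_iff] <;> linarith
    have h2 : (1 - ((n:ℝ) + 1)⁻¹) ∈ Ioo (-1:ℝ) 1 := by constructor <;> linarith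
    have h3 : (-(1 - ((n:ℝ) + 1)⁻¹)) ≤ (1 - ((n:ℝ) + 1)⁻¹) := by linarith
    exact ((intervalIntegrable_iff_integrableOn_Ioc_of_le h3).1 (hii _ h1 _ h2)).1
  -- integrability of f' on Ioo (-1) 1
  have hint' : IntegrableOn f' (Ioo (-1:ℝ) 1) volume := by
    apply Integrable.mono' (g := fun x => 1 + ‖f' x‖ ^ 2)
      (by exact (integrableOn_const measure_Ioo_lt_top.ne :
        IntegrableOn (fun _ : ℝ => (1:ℝ)) (Ioo (-1:ℝ) 1) volume).add hsq) hmeas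
    exact Filter.Eventually.of_forall fun x => by nlinarith [sq_nonneg (‖f' x‖ - 1)]
  have hint : IntervalIntegrable f' volume (-1) 1 :=
    (intervalIntegrable_iff_integrableOn_Ioo_of_le (by norm_num)).2 hint'
  have hsub : ∀ x ∈ Icc (-1:ℝ) 1, ∀ y ∈ Icc (-1:ℝ) 1, IntervalIntegrable f' volume x y :=
    fun x hx y hy => hint.mono_set
      (by rw [uIcc_of_le (by norm_num : (-1:ℝ) ≤ 1)]; exact uIcc_subset_Icc hx hy)
  set g : ℝ → ℂ := fun x => f 0 + ∫ t in (0:ℝ)..x, f' t with hgdef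
  have hg0 : ∀ x ∈ Ioo (-1:ℝ) 1, g x = f x := by
    intro x hx
    have h0 := hFTC 0 (by norm_num) x hx
    show f 0 + ∫ t in (0:ℝ)..x, f' t = f x
    rw [← h0]; ring
  have hgFTC : ∀ x ∈ Icc (-1:ℝ) 1, ∀ y ∈ Icc (-1:ℝ) 1, g y - g x = ∫ t in x..y, f' t := by
    intro x hx y hy
    have h3 := intervalIntegral.integral_add_adjacent_intervals
      (hsub x hx 0 (by norm_num)) (hsub 0 (by norm_num) y hy)
    have h4 : (∫ t in x..(0:ℝ), f' t) = -∫ t in (0:ℝ)..x, f' t :=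
      intervalIntegral.integral_symm 0 x
    show (f 0 + ∫ t in (0:ℝ)..y, f' t) - (f 0 + ∫ t in (0:ℝ)..x, f' t) = _
    rw [← h3, h4]; ring
  have hgc : ∀ c : ℝ, ContinuousWithinAt g (Icc (-1:ℝ) 1) c := by
    intro c
    apply ContinuousWithinAt.add continuousWithinAt_const
    apply intervalIntegral.continuousWithinAt_primitive (measure_singleton _)
    rw [show min (0:ℝ) (-1) = -1 by norm_num, show max (0:ℝ) 1 = 1 by norm_num]
    exact hint
  -- boundary value at 1
  have hg1 : g 1 = 0 := by
    by_contra hc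
    have hcpos : 0 < ‖g 1‖ := norm_pos_iff.2 hc
    obtain ⟨δ, hδ, hδ2⟩ := Metric.continuousWithinAt_iff.1 (hgc 1) (‖g 1‖ / 2) (by positivity)
    set c := ‖g 1‖ with hcdef
    set a : ℝ := max (1 - δ) 0 with hadef
    have ha0 : 0 ≤ a := le_max_right _ _
    have ha1 : a < 1 := by apply max_lt <;> [linarith; norm_num]
    have haδ : 1 - δ ≤ a := le_max_left _ _
    have haIoo : ∀ x ∈ Ioo a 1, ‖f x‖ ≥ c / 2 := by
      intro x hx
      have hx1 : x ∈ Icc (-1:ℝ) 1 := ⟨by linarith [hx.1], hx.2.le⟩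
      have hxd : dist x 1 < δ := by
        rw [Real.dist_eq, abs_of_nonpos (by linarith [hx.2])]
        linarith [hx.1]
      have hd := hδ2 hx1 hxd
      rw [dist_eq_norm] at hd
      have hxo : x ∈ Ioo (-1:ℝ) 1 := ⟨by linarith [hx.1], hx.2⟩
      rw [← hg0 x hxo]
      have htri : c ≤ ‖g x‖ + ‖g x - g 1‖ := by
        calc c = ‖g x - (g x - g 1)‖ := by rw [hcdef]; congr 1; ring
          _ ≤ ‖g x‖ + ‖g x - g 1‖ := norm_sub_le _ _
      linarith
    apply not_int_right a ha1
    apply Integrable.mono' (g := fun x => (8 / c ^ 2) * (‖f x‖ ^ 2 * (1 - x ^ 2)⁻¹))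
      ((hL2.mono_set (Ioo_subset_Ioo (by linarith) le_rfl)).const_mul _)
      ((measurable_const.sub measurable_id).inv).aestronglyMeasurable
    rw [ae_restrict_iff' measurableSet_Ioo]
    refine Filter.Eventually.of_forall fun x hx => ?_
    simp only [Pi.inv_apply, Pi.sub_apply, Pi.add_apply, id_eq]
    have h1x : 0 < 1 - x := by linarith [hx.2]
    have h2x : 0 < 1 + x := by linarith [hx.1]
    have hfx := haIoo x hx
    have hpos : 0 < 1 - x ^ 2 := by nlinarith
    rw [Real.norm_eq_abs, abs_of_nonneg (inv_nonneg.2 h1x.le)]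
    have hb1 : c ^ 2 / 4 ≤ ‖f x‖ ^ 2 := by nlinarith [norm_nonneg (f x)]
    have hle : 1 - x ^ 2 ≤ 2 * (1 - x) := by nlinarith
    have hb2 : (1 - x)⁻¹ / 2 ≤ (1 - x ^ 2)⁻¹ := by
      have h5 := inv_anti₀ hpos hle
      rw [mul_inv] at h5
      rw [div_eq_mul_inv, mul_comm]
      calc 2⁻¹ * (1 - x)⁻¹ = (2:ℝ)⁻¹ * (1 - x)⁻¹ := rfl
        _ ≤ (1 - x ^ 2)⁻¹ := h5
    have key : c ^ 2 / 8 * (1 - x)⁻¹ ≤ ‖f x‖ ^ 2 * (1 - x ^ 2)⁻¹ := by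
      calc c ^ 2 / 8 * (1 - x)⁻¹ = (c ^ 2 / 4) * ((1 - x)⁻¹ / 2) := by ring
        _ ≤ ‖f x‖ ^ 2 * (1 - x ^ 2)⁻¹ :=
            mul_le_mul hb1 hb2 (by positivity) (by positivity)
    calc (1 - x)⁻¹ = 8 / c ^ 2 * (c ^ 2 / 8 * (1 - x)⁻¹) := by field_simp
      _ ≤ 8 / c ^ 2 * (‖f x‖ ^ 2 * (1 - x ^ 2)⁻¹) :=
          mul_le_mul_of_nonneg_left key (by positivity)
  -- boundary value at -1
  have hgm1 : g (-1) = 0 := by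
    by_contra hc
    have hcpos : 0 < ‖g (-1)‖ := norm_pos_iff.2 hc
    obtain ⟨δ, hδ, hδ2⟩ := Metric.continuousWithinAt_iff.1 (hgc (-1)) (‖g (-1)‖ / 2)
      (by positivity)
    set c := ‖g (-1)‖ with hcdef
    set b : ℝ := min (-1 + δ) 0 with hbdef
    have hb0 : b ≤ 0 := min_le_right _ _
    have hb1 : -1 < b := by apply lt_min <;> [linarith; norm_num]
    have hbδ : b ≤ -1 + δ := min_le_left _ _
    have haIoo : ∀ x ∈ Ioo (-1:ℝ) b, ‖f x‖ ≥ c / 2 := by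
      intro x hx
      have hx1 : x ∈ Icc (-1:ℝ) 1 := ⟨hx.1.le, by linarith [hx.2]⟩
      have hxd : dist x (-1) < δ := by
        rw [Real.dist_eq, abs_of_nonneg (by linarith [hx.1])]
        linarith [hx.2]
      have hd := hδ2 hx1 hxd
      rw [dist_eq_norm] at hd
      have hxo : x ∈ Ioo (-1:ℝ) 1 := ⟨hx.1, by linarith [hx.2]⟩
      rw [← hg0 x hxo]
      have htri : c ≤ ‖g x‖ + ‖g x - g (-1)‖ := by
        calc c = ‖g x - (g x - g (-1))‖ := by rw [hcdef]; congr 1; ring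
          _ ≤ ‖g x‖ + ‖g x - g (-1)‖ := norm_sub_le _ _
      linarith
    apply not_int_left b hb1
    apply Integrable.mono' (g := fun x => (8 / c ^ 2) * (‖f x‖ ^ 2 * (1 - x ^ 2)⁻¹))
      ((hL2.mono_set (Ioo_subset_Ioo le_rfl (by linarith))).const_mul _)
      ((measurable_const.add measurable_id).inv).aestronglyMeasurable
    rw [ae_restrict_iff' measurableSet_Ioo]
    refine Filter.Eventually.of_forall fun x hx => ?_
    simp only [Pi.inv_apply, Pi.sub_apply, Pi.add_apply, id_eq]
    have h1x : 0 < 1 - x := by linarith [hx.2]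
    have h2x : 0 < 1 + x := by linarith [hx.1]
    have hfx := haIoo x hx
    have hpos : 0 < 1 - x ^ 2 := by nlinarith
    rw [Real.norm_eq_abs, abs_of_nonneg (inv_nonneg.2 h2x.le)]
    have hb1' : c ^ 2 / 4 ≤ ‖f x‖ ^ 2 := by nlinarith [norm_nonneg (f x)]
    have hle : 1 - x ^ 2 ≤ 2 * (1 + x) := by nlinarith
    have hb2 : (1 + x)⁻¹ / 2 ≤ (1 - x ^ 2)⁻¹ := by
      have h5 := inv_anti₀ hpos hle
      rw [mul_inv] at h5
      rw [div_eq_mul_inv, mul_comm]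
      exact h5
    have key : c ^ 2 / 8 * (1 + x)⁻¹ ≤ ‖f x‖ ^ 2 * (1 - x ^ 2)⁻¹ := by
      calc c ^ 2 / 8 * (1 + x)⁻¹ = (c ^ 2 / 4) * ((1 + x)⁻¹ / 2) := by ring
        _ ≤ ‖f x‖ ^ 2 * (1 - x ^ 2)⁻¹ :=
            mul_le_mul hb1' hb2 (by positivity) (by positivity)
    calc (1 + x)⁻¹ = 8 / c ^ 2 * (c ^ 2 / 8 * (1 + x)⁻¹) := by field_simp
      _ ≤ 8 / c ^ 2 * (‖f x‖ ^ 2 * (1 - x ^ 2)⁻¹) :=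
          mul_le_mul_of_nonneg_left key (by positivity)
  exact ⟨g, hg0, hgFTC, hint, hsq, hg1, hgm1⟩

/-- `W₁ = V₁`: every `f ∈ W₁` lies in `V₁` (in particular
`f ∈ L²((-1,1);(1-x²)⁻¹dx)`), and conversely every `f ∈ V₁` extends continuously to
`[-1,1]` with boundary values `0`, giving an element of `W₁`. -/
theorem W1_eq_V1 :
    (∀ f f' : ℝ → ℂ, InW1 f f' → InV1 f f') ∧
    (∀ f f' : ℝ → ℂ, InV1 f f' →
      ∃ g : ℝ → ℂ, (∀ x ∈ Ioo (-1 : ℝ) 1, g x = f x) ∧ InW1 g f') := by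
  exact ⟨dir1, dir2⟩
end

section
/- Fix k > 0. On the space W₁ = V₁, the Sobolev inner product φ(f,g) = ∫_{-1}^{1} f'ḡ' dx (the boundary terms vanish since f(±1)=0) and the first left-definite inner product (f,g)₁ := ∫_{-1}^{1} [f'(x)ḡ'(x) + k·f(x)ḡ(x)(1-x²)^{-1}] dx are equivalent: ‖f‖_φ ≤ ‖f‖₁ for all f ∈ W₁, and there exists a constant C > 0 such that ‖f‖₁ ≤ C·‖f‖_φ for all f ∈ W₁. -/
open MeasureTheory Set

open Filter


lemma cs_sq (g : ℝ → ℂ) (S : Set ℝ) (hμ : volume S ≠ ⊤)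
    (hsq : IntegrableOn (fun t => ‖g t‖ ^ 2) S) :
    ‖∫ t in S, g t‖ ^ 2 ≤ (volume S).toReal * ∫ t in S, ‖g t‖ ^ 2 := by
  set m : ℝ := (volume S).toReal with hm
  set J : ℝ := ∫ t in S, ‖g t‖ ^ 2 with hJ
  have hm0 : 0 ≤ m := ENNReal.toReal_nonneg
  have hJ0 : 0 ≤ J := integral_nonneg fun t => by positivity
  have hI0 : 0 ≤ ∫ t in S, ‖g t‖ := integral_nonneg fun t => norm_nonneg _
  have hIle : ∀ ε : ℝ, 0 < ε → ∫ t in S, ‖g t‖ ≤ (ε * J + ε⁻¹ * m) / 2 := by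
    intro ε hε
    have h1 : ∫ t in S, ‖g t‖ ≤ ∫ t in S, (ε * ‖g t‖ ^ 2 + ε⁻¹) / 2 := by
      refine integral_mono_of_nonneg (Eventually.of_forall fun t => norm_nonneg _)
        (((hsq.const_mul ε).add
          (integrableOn_const hμ)).div_const 2)
        (Eventually.of_forall fun t => ?_)
      have h2 : 0 ≤ ε * (‖g t‖ - ε⁻¹) ^ 2 := by positivity
      have h3 : ε * ε⁻¹ = 1 := mul_inv_cancel₀ hε.ne'
      have h4 : ε * (‖g t‖ - ε⁻¹) ^ 2
          = ε * ‖g t‖ ^ 2 - 2 * (ε * ε⁻¹) * ‖g t‖ + ε⁻¹ * (ε * ε⁻¹) := by ring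
      rw [h3] at h4
      simp only []
      nlinarith [h2, h4]
    have h2 : ∫ t in S, (ε * ‖g t‖ ^ 2 + ε⁻¹) / 2
        = (ε * J + ε⁻¹ * m) / 2 := by
      rw [integral_div, integral_add (hsq.const_mul ε)
        (integrableOn_const hμ), integral_const_mul, setIntegral_const]
      simp [hJ, hm, smul_eq_mul, mul_comm, measureReal_def]
    linarith [h1, h2.symm.le]
  have hnorm : ‖∫ t in S, g t‖ ≤ ∫ t in S, ‖g t‖ := norm_integral_le_integral_norm g
  rcases eq_or_lt_of_le hJ0 with hJz | hJpos
  · have h0 : (fun t => ‖g t‖ ^ 2) =ᶠ[ae (volume.restrict S)] 0 :=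
      (integral_eq_zero_iff_of_nonneg (fun t => by positivity) hsq).1 hJz.symm
    have hg0 : (fun t => ‖g t‖) =ᶠ[ae (volume.restrict S)] 0 := by
      filter_upwards [h0] with t ht
      simpa [pow_eq_zero_iff] using ht
    have hIz : ∫ t in S, ‖g t‖ = 0 := by
      rw [integral_congr_ae hg0]; simp
    nlinarith [hnorm, norm_nonneg (∫ t in S, g t)]
  rcases eq_or_lt_of_le hm0 with hmz | hmpos
  · have hS0 : volume S = 0 := by
      rcases (ENNReal.toReal_eq_zero_iff _).1 hmz.symm with h | h
      · exact h
      · exact absurd h hμ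
    have hz : volume.restrict S = 0 := Measure.restrict_eq_zero.2 hS0
    rw [hJ, hz] at hJpos
    simp at hJpos
  · set s : ℝ := Real.sqrt (m / J) with hsd
    have hspos : 0 < s := Real.sqrt_pos.2 (by positivity)
    have hs2 : s ^ 2 = m / J := Real.sq_sqrt (by positivity)
    have hmeq : m = s ^ 2 * J := by rw [hs2, div_mul_cancel₀ m hJpos.ne']
    have hinv : s⁻¹ * m = s * J := by
      rw [hmeq]; field_simp
    have key := hIle s hspos
    rw [hinv] at key
    have key2 : ∫ t in S, ‖g t‖ ≤ s * J := by linarith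
    have : ‖∫ t in S, g t‖ ≤ s * J := le_trans hnorm key2
    nlinarith [norm_nonneg (∫ t in S, g t), hs2, hJpos]

lemma key_right (f f' : ℝ → ℂ)
    (hint : IntegrableOn f' (Ioo (-1 : ℝ) 1))
    (hft : ∀ x ∈ Ioo (-1 : ℝ) 1, ∀ y ∈ Ioo (-1 : ℝ) 1, f y - f x = ∫ t in x..y, f' t)
    (hw : IntegrableOn (fun x => ‖f x‖ ^ 2 * (1 - x ^ 2)⁻¹) (Ioo (-1 : ℝ) 1))
    (hsq : IntegrableOn (fun x => ‖f' x‖ ^ 2) (Ioo (-1 : ℝ) 1)) :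
    ∀ x ∈ Ioo (-1 : ℝ) 1, ‖f x‖ ^ 2 ≤ (1 - x) * ∫ t in Ioo (-1 : ℝ) 1, ‖f' t‖ ^ 2 := by
  set A : ℝ := ∫ t in Ioo (-1 : ℝ) 1, ‖f' t‖ ^ 2 with hA
  have hA0 : 0 ≤ A := setIntegral_nonneg measurableSet_Ioo fun t _ => by positivity
  set F : ℝ → ℂ := fun x => ∫ t in Ioo x 1, f' t with hF
  -- bound on F
  have hFb : ∀ x ∈ Ioo (-1 : ℝ) 1, ‖F x‖ ^ 2 ≤ (1 - x) * A := by
    rintro x ⟨hx1, hx2⟩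
    have hsub : Ioo x 1 ⊆ Ioo (-1 : ℝ) 1 := Ioo_subset_Ioo hx1.le le_rfl
    have h1 : ‖F x‖ ^ 2 ≤ (volume (Ioo x 1)).toReal * ∫ t in Ioo x 1, ‖f' t‖ ^ 2 :=
      cs_sq f' _ (by simp [Real.volume_Ioo]) (hsq.mono_set hsub)
    have h2 : ∫ t in Ioo x 1, ‖f' t‖ ^ 2 ≤ A := by
      refine setIntegral_mono_set hsq ?_ (HasSubset.Subset.eventuallyLE hsub)
      exact Eventually.of_forall fun t => by positivity
    have h3 : (volume (Ioo x 1)).toReal = 1 - x := by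
      rw [Real.volume_Ioo, ENNReal.toReal_ofReal (by linarith)]
    calc ‖F x‖ ^ 2 ≤ (volume (Ioo x 1)).toReal * ∫ t in Ioo x 1, ‖f' t‖ ^ 2 := h1
      _ ≤ (1 - x) * A := by rw [h3]; exact mul_le_mul_of_nonneg_left h2 (by linarith)
  -- constancy of f + F
  have hconst : ∀ x ∈ Ioo (-1 : ℝ) 1, ∀ y ∈ Ioo (-1 : ℝ) 1, x ≤ y →
      f x + F x = f y + F y := by
    rintro x ⟨hx1, hx2⟩ y ⟨hy1, hy2⟩ hxy
    have hdiff : f y - f x = ∫ t in Ioc x y, f' t := by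
      rw [hft x ⟨hx1, hx2⟩ y ⟨hy1, hy2⟩, intervalIntegral.integral_of_le hxy]
    have hsplit : F x = (∫ t in Ioc x y, f' t) + F y := by
      have hu : Ioc x y ∪ Ioo y 1 = Ioo x 1 := Ioc_union_Ioo_eq_Ioo hxy hy2
      have hd : Disjoint (Ioc x y) (Ioo y 1) :=
        Set.disjoint_left.2 fun t ht1 ht2 => absurd ht1.2 (not_le.2 ht2.1)
      have h5 := setIntegral_union (f := f') (μ := volume) hd measurableSet_Ioo
        (hint.mono_set (fun t ht => ⟨lt_trans hx1 ht.1, lt_of_le_of_lt ht.2 hy2⟩))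
        (hint.mono_set (Ioo_subset_Ioo hy1.le le_rfl))
      rw [hu] at h5
      exact h5
    rw [hsplit, ← hdiff]
    ring
  have h0mem : (0:ℝ) ∈ Ioo (-1:ℝ) 1 := by norm_num
  set c : ℂ := f 0 + F 0 with hcdef
  have hc : ∀ x ∈ Ioo (-1:ℝ) 1, f x + F x = c := by
    intro x hx
    rcases le_total x 0 with h | h
    · exact hconst x hx 0 h0mem h
    · exact (hconst 0 h0mem x hx h).symm
  have hc0 : c = 0 := by
    by_contra hne
    have hcpos : 0 < ‖c‖ := norm_pos_iff.2 hne
    set a : ℝ := max 0 (1 - ‖c‖ ^ 2 / (4 * (A + 1))) with ha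
    have ha0 : (0:ℝ) ≤ a := le_max_left _ _
    have ha1 : a < 1 := by
      apply max_lt (by norm_num)
      have : 0 < ‖c‖ ^ 2 / (4 * (A + 1)) := div_pos (pow_pos hcpos 2) (by linarith)
      linarith
    have hamem : ∀ x ∈ Ioo a 1, x ∈ Ioo (-1:ℝ) 1 := by
      rintro x ⟨h1, h2⟩
      exact ⟨by linarith, h2⟩
    have hwb : ∀ x ∈ Ioo a 1, ‖c‖ ^ 2 / 8 * (1 - x)⁻¹ ≤ ‖f x‖ ^ 2 * (1 - x ^ 2)⁻¹ := by
      rintro x ⟨h1, h2⟩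
      have hx0 : (0:ℝ) ≤ x := le_trans ha0 h1.le
      have hxm : x ∈ Ioo (-1:ℝ) 1 := hamem x ⟨h1, h2⟩
      have hF2 : ‖F x‖ ^ 2 ≤ ‖c‖ ^ 2 / 4 := by
        have b1 : ‖F x‖ ^ 2 ≤ (1 - x) * A := hFb x hxm
        have b2 : 1 - x ≤ ‖c‖ ^ 2 / (4 * (A + 1)) := by
          have := le_max_right 0 (1 - ‖c‖ ^ 2 / (4 * (A + 1)))
          linarith
        have b3 : (1 - x) * A ≤ ‖c‖ ^ 2 / (4 * (A + 1)) * A :=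
          mul_le_mul_of_nonneg_right b2 hA0
        have b4 : ‖c‖ ^ 2 / (4 * (A + 1)) * A ≤ ‖c‖ ^ 2 / 4 := by
          rw [div_mul_eq_mul_div, div_le_div_iff₀ (by linarith) (by norm_num)]
          nlinarith [sq_nonneg ‖c‖]
        linarith
      have hFle : ‖F x‖ ≤ ‖c‖ / 2 := by
        have := Real.sqrt_le_sqrt hF2
        rwa [Real.sqrt_sq (norm_nonneg _),
          show ‖c‖ ^ 2 / 4 = (‖c‖ / 2) ^ 2 by ring,
          Real.sqrt_sq (by positivity)] at this
      have hfx : ‖c‖ / 2 ≤ ‖f x‖ := by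
        have hfeq : f x = c - F x := by
          have := hc x hxm
          linear_combination this
        rw [hfeq]
        have := norm_sub_norm_le c (F x)
        calc ‖c‖ / 2 = ‖c‖ - ‖c‖ / 2 := by ring
          _ ≤ ‖c‖ - ‖F x‖ := by linarith
          _ ≤ ‖c - F x‖ := this
      have hf2 : ‖c‖ ^ 2 / 4 ≤ ‖f x‖ ^ 2 := by
        have := pow_le_pow_left₀ (by positivity) hfx 2
        calc ‖c‖ ^ 2 / 4 = (‖c‖ / 2) ^ 2 := by ring
          _ ≤ ‖f x‖ ^ 2 := this
      have hx1 : 0 < 1 - x := by linarith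
      have hx2' : 0 < 1 + x := by linarith
      have hinv : (2 * (1 - x))⁻¹ ≤ (1 - x ^ 2)⁻¹ := by
        apply inv_anti₀ (by nlinarith)
        nlinarith
      calc ‖c‖ ^ 2 / 8 * (1 - x)⁻¹ = ‖c‖ ^ 2 / 4 * (2 * (1 - x))⁻¹ := by
            rw [mul_inv]; ring
        _ ≤ ‖c‖ ^ 2 / 4 * (1 - x ^ 2)⁻¹ :=
            mul_le_mul_of_nonneg_left hinv (by positivity)
        _ ≤ ‖f x‖ ^ 2 * (1 - x ^ 2)⁻¹ := by
            apply mul_le_mul_of_nonneg_right hf2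
            exact inv_nonneg.2 (by nlinarith)
    have hIc : IntegrableOn (fun x => ‖c‖ ^ 2 / 8 * (1 - x)⁻¹) (Ioo a 1) := by
      refine Integrable.mono' (hw.mono_set fun t ht => hamem t ht) ?_ ?_
      · exact (((measurable_const.sub measurable_id').inv).const_mul
          (‖c‖ ^ 2 / 8)).aestronglyMeasurable
      · rw [ae_restrict_iff' measurableSet_Ioo]
        refine Eventually.of_forall fun x hx => ?_
        have hx1 : 0 < 1 - x := by rcases hx with ⟨_, h2⟩; linarith
        rw [Real.norm_of_nonneg (by positivity)]
        exact hwb x hx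
    have hI1 : IntegrableOn (fun x => (1 - x)⁻¹) (Ioo a 1) := by
      have hcc : (8:ℝ) / ‖c‖ ^ 2 * (‖c‖ ^ 2 / 8) = 1 := by
        rw [div_mul_div_comm, mul_comm (8:ℝ) (‖c‖ ^ 2), div_self (by positivity)]
      have h8 : ∀ x : ℝ, 8 / ‖c‖ ^ 2 * (‖c‖ ^ 2 / 8 * (1 - x)⁻¹) = (1 - x)⁻¹ := by
        intro x
        rw [← mul_assoc, hcc, one_mul]
      exact (Integrable.congr (hIc.const_mul (8 / ‖c‖ ^ 2))
        (Eventually.of_forall fun x => h8 x))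
    have hI2 : IntegrableOn (fun x => (x - 1)⁻¹) (Ioo a 1) := by
      refine Integrable.congr hI1.neg (Eventually.of_forall fun x => ?_)
      simp only [Pi.neg_apply]
      rw [neg_inv, neg_sub]
    have hI3 : IntervalIntegrable (fun x => (x - 1)⁻¹) volume a 1 := by
      rw [intervalIntegrable_iff_integrableOn_Ioc_of_le ha1.le,
        integrableOn_Ioc_iff_integrableOn_Ioo]
      exact hI2
    rw [intervalIntegrable_sub_inv_iff] at hI3
    rcases hI3 with h | h
    · exact ha1.ne h
    · exact h (right_mem_uIcc)
  intro x hx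
  have hfeq : f x = -F x := by
    have := hc x hx
    rw [hc0] at this
    linear_combination this
  rw [hfeq, norm_neg]
  exact hFb x hx

lemma key_left (f f' : ℝ → ℂ)
    (hint : IntegrableOn f' (Ioo (-1 : ℝ) 1))
    (hft : ∀ x ∈ Ioo (-1 : ℝ) 1, ∀ y ∈ Ioo (-1 : ℝ) 1, f y - f x = ∫ t in x..y, f' t)
    (hw : IntegrableOn (fun x => ‖f x‖ ^ 2 * (1 - x ^ 2)⁻¹) (Ioo (-1 : ℝ) 1))
    (hsq : IntegrableOn (fun x => ‖f' x‖ ^ 2) (Ioo (-1 : ℝ) 1)) :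
    ∀ x ∈ Ioo (-1 : ℝ) 1, ‖f x‖ ^ 2 ≤ (1 + x) * ∫ t in Ioo (-1 : ℝ) 1, ‖f' t‖ ^ 2 := by
  set A : ℝ := ∫ t in Ioo (-1 : ℝ) 1, ‖f' t‖ ^ 2 with hA
  have hA0 : 0 ≤ A := setIntegral_nonneg measurableSet_Ioo fun t _ => by positivity
  set G : ℝ → ℂ := fun x => ∫ t in Ioo (-1 : ℝ) x, f' t with hG
  have hGb : ∀ x ∈ Ioo (-1 : ℝ) 1, ‖G x‖ ^ 2 ≤ (1 + x) * A := by
    rintro x ⟨hx1, hx2⟩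
    have hsub : Ioo (-1 : ℝ) x ⊆ Ioo (-1 : ℝ) 1 := Ioo_subset_Ioo le_rfl hx2.le
    have h1 : ‖G x‖ ^ 2 ≤ (volume (Ioo (-1 : ℝ) x)).toReal * ∫ t in Ioo (-1 : ℝ) x, ‖f' t‖ ^ 2 :=
      cs_sq f' _ (by simp [Real.volume_Ioo]) (hsq.mono_set hsub)
    have h2 : ∫ t in Ioo (-1 : ℝ) x, ‖f' t‖ ^ 2 ≤ A := by
      refine setIntegral_mono_set hsq ?_ (HasSubset.Subset.eventuallyLE hsub)
      exact Eventually.of_forall fun t => by positivity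
    have h3 : (volume (Ioo (-1 : ℝ) x)).toReal = 1 + x := by
      rw [Real.volume_Ioo, ENNReal.toReal_ofReal (by linarith)]
      ring
    calc ‖G x‖ ^ 2 ≤ (volume (Ioo (-1 : ℝ) x)).toReal * ∫ t in Ioo (-1 : ℝ) x, ‖f' t‖ ^ 2 := h1
      _ ≤ (1 + x) * A := by rw [h3]; exact mul_le_mul_of_nonneg_left h2 (by linarith)
  have hconst : ∀ x ∈ Ioo (-1 : ℝ) 1, ∀ y ∈ Ioo (-1 : ℝ) 1, x ≤ y →
      f x - G x = f y - G y := by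
    rintro x ⟨hx1, hx2⟩ y ⟨hy1, hy2⟩ hxy
    have hdiff : f y - f x = ∫ t in Ioc x y, f' t := by
      rw [hft x ⟨hx1, hx2⟩ y ⟨hy1, hy2⟩, intervalIntegral.integral_of_le hxy]
    have hsplit : G y = G x + ∫ t in Ioc x y, f' t := by
      have hu : Ioo (-1 : ℝ) x ∪ Ico x y = Ioo (-1 : ℝ) y := Ioo_union_Ico_eq_Ioo hx1 hxy
      have hd : Disjoint (Ioo (-1 : ℝ) x) (Ico x y) :=
        Set.disjoint_left.2 fun t ht1 ht2 => absurd ht1.2 (not_lt.2 ht2.1)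
      have h5 := setIntegral_union (f := f') (μ := volume) hd measurableSet_Ico
        (hint.mono_set (Ioo_subset_Ioo le_rfl hx2.le))
        (hint.mono_set (fun t ht => ⟨lt_of_lt_of_le hx1 ht.1, lt_of_lt_of_le ht.2 hy2.le⟩))
      rw [hu] at h5
      rw [hG]
      simp only []
      rw [h5, integral_Ico_eq_integral_Ioo, integral_Ioc_eq_integral_Ioo]
    rw [hsplit]
    linear_combination -hdiff
  have h0mem : (0:ℝ) ∈ Ioo (-1:ℝ) 1 := by norm_num
  set c : ℂ := f 0 - G 0 with hcdef
  have hc : ∀ x ∈ Ioo (-1:ℝ) 1, f x - G x = c := by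
    intro x hx
    rcases le_total x 0 with h | h
    · exact hconst x hx 0 h0mem h
    · exact (hconst 0 h0mem x hx h).symm
  have hc0 : c = 0 := by
    by_contra hne
    have hcpos : 0 < ‖c‖ := norm_pos_iff.2 hne
    set b : ℝ := min 0 (-1 + ‖c‖ ^ 2 / (4 * (A + 1))) with hb
    have hb0 : b ≤ 0 := min_le_left _ _
    have hb1 : -1 < b := by
      apply lt_min (by norm_num)
      have : 0 < ‖c‖ ^ 2 / (4 * (A + 1)) := div_pos (pow_pos hcpos 2) (by linarith)
      linarith
    have hbmem : ∀ x ∈ Ioo (-1:ℝ) b, x ∈ Ioo (-1:ℝ) 1 := by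
      rintro x ⟨h1, h2⟩
      exact ⟨h1, by linarith⟩
    have hwb : ∀ x ∈ Ioo (-1:ℝ) b, ‖c‖ ^ 2 / 8 * (1 + x)⁻¹ ≤ ‖f x‖ ^ 2 * (1 - x ^ 2)⁻¹ := by
      rintro x ⟨h1, h2⟩
      have hx0 : x ≤ 0 := le_trans h2.le hb0
      have hxm : x ∈ Ioo (-1:ℝ) 1 := hbmem x ⟨h1, h2⟩
      have hF2 : ‖G x‖ ^ 2 ≤ ‖c‖ ^ 2 / 4 := by
        have b1 : ‖G x‖ ^ 2 ≤ (1 + x) * A := hGb x hxm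
        have b2 : 1 + x ≤ ‖c‖ ^ 2 / (4 * (A + 1)) := by
          have := min_le_right 0 (-1 + ‖c‖ ^ 2 / (4 * (A + 1)))
          linarith
        have b3 : (1 + x) * A ≤ ‖c‖ ^ 2 / (4 * (A + 1)) * A :=
          mul_le_mul_of_nonneg_right b2 hA0
        have b4 : ‖c‖ ^ 2 / (4 * (A + 1)) * A ≤ ‖c‖ ^ 2 / 4 := by
          rw [div_mul_eq_mul_div, div_le_div_iff₀ (by linarith) (by norm_num)]
          nlinarith [sq_nonneg ‖c‖]
        linarith
      have hFle : ‖G x‖ ≤ ‖c‖ / 2 := by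
        have := Real.sqrt_le_sqrt hF2
        rwa [Real.sqrt_sq (norm_nonneg _),
          show ‖c‖ ^ 2 / 4 = (‖c‖ / 2) ^ 2 by ring,
          Real.sqrt_sq (by positivity)] at this
      have hfx : ‖c‖ / 2 ≤ ‖f x‖ := by
        have hfeq : f x = c + G x := by
          have := hc x hxm
          linear_combination this
        rw [hfeq]
        have h6 := norm_le_add_norm_add c (G x)
        calc ‖c‖ / 2 = ‖c‖ - ‖c‖ / 2 := by ring
          _ ≤ ‖c‖ - ‖G x‖ := by linarith
          _ ≤ ‖c + G x‖ := by linarith [h6]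
      have hf2 : ‖c‖ ^ 2 / 4 ≤ ‖f x‖ ^ 2 := by
        have := pow_le_pow_left₀ (by positivity) hfx 2
        calc ‖c‖ ^ 2 / 4 = (‖c‖ / 2) ^ 2 := by ring
          _ ≤ ‖f x‖ ^ 2 := this
      have hx1 : 0 < 1 + x := by linarith
      have hx2' : 0 < 1 - x := by linarith
      have hinv : (2 * (1 + x))⁻¹ ≤ (1 - x ^ 2)⁻¹ := by
        apply inv_anti₀ (by nlinarith)
        nlinarith
      calc ‖c‖ ^ 2 / 8 * (1 + x)⁻¹ = ‖c‖ ^ 2 / 4 * (2 * (1 + x))⁻¹ := by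
            rw [mul_inv]; ring
        _ ≤ ‖c‖ ^ 2 / 4 * (1 - x ^ 2)⁻¹ :=
            mul_le_mul_of_nonneg_left hinv (by positivity)
        _ ≤ ‖f x‖ ^ 2 * (1 - x ^ 2)⁻¹ := by
            apply mul_le_mul_of_nonneg_right hf2
            exact inv_nonneg.2 (by nlinarith)
    have hIc : IntegrableOn (fun x => ‖c‖ ^ 2 / 8 * (1 + x)⁻¹) (Ioo (-1:ℝ) b) := by
      refine Integrable.mono' (hw.mono_set fun t ht => hbmem t ht) ?_ ?_
      · exact (((measurable_const.add measurable_id').inv).const_mul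
          (‖c‖ ^ 2 / 8)).aestronglyMeasurable
      · rw [ae_restrict_iff' measurableSet_Ioo]
        refine Eventually.of_forall fun x hx => ?_
        have hx1 : 0 < 1 + x := by rcases hx with ⟨h1, _⟩; linarith
        rw [Real.norm_of_nonneg (by positivity)]
        exact hwb x hx
    have hI1 : IntegrableOn (fun x => (1 + x)⁻¹) (Ioo (-1:ℝ) b) := by
      have hcc : (8:ℝ) / ‖c‖ ^ 2 * (‖c‖ ^ 2 / 8) = 1 := by
        rw [div_mul_div_comm, mul_comm (8:ℝ) (‖c‖ ^ 2), div_self (by positivity)]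
      have h8 : ∀ x : ℝ, 8 / ‖c‖ ^ 2 * (‖c‖ ^ 2 / 8 * (1 + x)⁻¹) = (1 + x)⁻¹ := by
        intro x
        rw [← mul_assoc, hcc, one_mul]
      exact (Integrable.congr (hIc.const_mul (8 / ‖c‖ ^ 2))
        (Eventually.of_forall fun x => h8 x))
    have hI2 : IntegrableOn (fun x => (x - (-1))⁻¹) (Ioo (-1:ℝ) b) := by
      refine Integrable.congr hI1 (Eventually.of_forall fun x => ?_)
      norm_num
      ring_nf
    have hI3 : IntervalIntegrable (fun x => (x - (-1))⁻¹) volume (-1) b := by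
      rw [intervalIntegrable_iff_integrableOn_Ioc_of_le hb1.le,
        integrableOn_Ioc_iff_integrableOn_Ioo]
      exact hI2
    rw [intervalIntegrable_sub_inv_iff] at hI3
    rcases hI3 with h | h
    · exact hb1.ne h
    · exact h (left_mem_uIcc)
  intro x hx
  have hfeq : f x = G x := by
    have := hc x hx
    rw [hc0] at this
    linear_combination this
  rw [hfeq]
  exact hGb x hx


lemma deriv_integrableOn (f' : ℝ → ℂ)
    (hii : ∀ x ∈ Ioo (-1 : ℝ) 1, ∀ y ∈ Ioo (-1 : ℝ) 1, IntervalIntegrable f' volume x y)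
    (hsq : IntegrableOn (fun x => ‖f' x‖ ^ 2) (Ioo (-1 : ℝ) 1)) :
    IntegrableOn f' (Ioo (-1 : ℝ) 1) := by
  have hmeas : AEStronglyMeasurable f' (volume.restrict (Ioo (-1 : ℝ) 1)) := by
    have hU : (⋃ n : ℕ, Ioc (-(1 - ((n : ℝ) + 2)⁻¹)) (1 - ((n : ℝ) + 2)⁻¹))
        = Ioo (-1 : ℝ) 1 := by
      ext t
      simp only [mem_iUnion, mem_Ioc, mem_Ioo]
      constructor
      · rintro ⟨n, h1, h2⟩
        have hp : (0 : ℝ) < ((n : ℝ) + 2)⁻¹ := by positivity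
        exact ⟨by linarith, by linarith⟩
      · rintro ⟨h1, h2⟩
        have habs : |t| < 1 := abs_lt.mpr ⟨h1, h2⟩
        obtain ⟨n, hn⟩ := exists_nat_one_div_lt (show (0:ℝ) < 1 - |t| by linarith)
        refine ⟨n, ?_, ?_⟩
        · have h3 : ((n : ℝ) + 2)⁻¹ ≤ ((n : ℝ) + 1)⁻¹ :=
            inv_anti₀ (by positivity) (by linarith)
          rw [one_div] at hn
          have h4 : ((n : ℝ) + 2)⁻¹ < 1 - |t| := lt_of_le_of_lt h3 hn
          linarith [neg_abs_le t]
        · have h3 : ((n : ℝ) + 2)⁻¹ ≤ ((n : ℝ) + 1)⁻¹ :=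
            inv_anti₀ (by positivity) (by linarith)
          rw [one_div] at hn
          have h4 : ((n : ℝ) + 2)⁻¹ < 1 - |t| := lt_of_le_of_lt h3 hn
          linarith [le_abs_self t]
    rw [← hU, aestronglyMeasurable_iUnion_iff]
    intro n
    have hε : (0 : ℝ) < ((n : ℝ) + 2)⁻¹ := by positivity
    have hc : ((n : ℝ) + 2) * ((n : ℝ) + 2)⁻¹ = 1 := mul_inv_cancel₀ (by positivity)
    have hn0 : (0 : ℝ) ≤ (n : ℝ) := Nat.cast_nonneg n
    have hε1 : ((n : ℝ) + 2)⁻¹ ≤ 1 := by nlinarith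
    have hmem1 : -(1 - ((n : ℝ) + 2)⁻¹) ∈ Ioo (-1 : ℝ) 1 := by
      constructor <;> [linarith; linarith]
    have hmem2 : (1 - ((n : ℝ) + 2)⁻¹) ∈ Ioo (-1 : ℝ) 1 := by
      constructor <;> [linarith; linarith]
    have h5 := hii _ hmem1 _ hmem2
    rw [intervalIntegrable_iff_integrableOn_Ioc_of_le (by linarith)] at h5
    exact h5.aestronglyMeasurable
  refine Integrable.mono' (g := fun x => 1 + ‖f' x‖ ^ 2) ?_ hmeas ?_
  · exact (integrableOn_const (C := (1:ℝ)) (by simp [Real.volume_Ioo])).add hsq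
  · refine Eventually.of_forall fun x => ?_
    nlinarith [sq_nonneg (‖f' x‖ - 1), norm_nonneg (f' x)]

/-- On `W₁ = V₁` the Sobolev norm `‖f‖_φ = (∫|f'|²)^{1/2}` and the first left-definite
norm `‖f‖₁ = (∫ [|f'|² + k|f|²(1-x²)⁻¹])^{1/2}` are equivalent: `‖f‖_φ ≤ ‖f‖₁`
always, and there is a constant `C > 0` with `‖f‖₁ ≤ C‖f‖_φ` for all `f ∈ W₁`. -/
theorem sobolev_left_definite_norms_equivalent (k : ℝ) (hk : 0 < k) :
    (∀ f f' : ℝ → ℂ, InV1 f f' →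
      Real.sqrt (∫ x in Ioo (-1 : ℝ) 1, ‖f' x‖ ^ 2) ≤
        Real.sqrt (∫ x in Ioo (-1 : ℝ) 1,
          (‖f' x‖ ^ 2 + k * ‖f x‖ ^ 2 * (1 - x ^ 2)⁻¹))) ∧
    ∃ C : ℝ, 0 < C ∧ ∀ f f' : ℝ → ℂ, InV1 f f' →
      Real.sqrt (∫ x in Ioo (-1 : ℝ) 1,
          (‖f' x‖ ^ 2 + k * ‖f x‖ ^ 2 * (1 - x ^ 2)⁻¹)) ≤
        C * Real.sqrt (∫ x in Ioo (-1 : ℝ) 1, ‖f' x‖ ^ 2) := by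
  constructor
  · rintro f f' ⟨hii, hft, hw, hsq⟩
    apply Real.sqrt_le_sqrt
    have hint2 : IntegrableOn
        (fun x => ‖f' x‖ ^ 2 + k * ‖f x‖ ^ 2 * (1 - x ^ 2)⁻¹) (Ioo (-1 : ℝ) 1) :=
      hsq.add ((hw.const_mul k).congr
        (Filter.Eventually.of_forall fun x => (mul_assoc k _ _).symm))
    refine setIntegral_mono_on hsq hint2 measurableSet_Ioo fun x hx => ?_
    obtain ⟨hx1, hx2⟩ := hx
    have hx3 : (0:ℝ) < 1 - x ^ 2 := by nlinarith
    have h0 : 0 ≤ k * ‖f x‖ ^ 2 * (1 - x ^ 2)⁻¹ :=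
      mul_nonneg (mul_nonneg hk.le (by positivity)) (inv_nonneg.2 hx3.le)
    linarith
  · refine ⟨Real.sqrt (1 + 2 * k), Real.sqrt_pos.2 (by linarith), ?_⟩
    rintro f f' ⟨hii, hft, hw, hsq⟩
    have hint := deriv_integrableOn f' hii hsq
    set A : ℝ := ∫ x in Ioo (-1 : ℝ) 1, ‖f' x‖ ^ 2 with hA
    set B : ℝ := ∫ x in Ioo (-1 : ℝ) 1, ‖f x‖ ^ 2 * (1 - x ^ 2)⁻¹ with hB
    have hA0 : 0 ≤ A := setIntegral_nonneg measurableSet_Ioo fun t _ => by positivity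
    have hR := key_right f f' hint hft hw hsq
    have hL := key_left f f' hint hft hw hsq
    have hptw : ∀ x ∈ Ioo (-1 : ℝ) 1, ‖f x‖ ^ 2 * (1 - x ^ 2)⁻¹ ≤ A := by
      rintro x ⟨hx1, hx2⟩
      have hw0 : (0:ℝ) < 1 - x ^ 2 := by nlinarith
      have hwp : (0:ℝ) < (1 - x ^ 2)⁻¹ := inv_pos.2 hw0
      rcases le_total x 0 with h0 | h0
      · have b2 := hL x ⟨hx1, hx2⟩
        calc ‖f x‖ ^ 2 * (1 - x ^ 2)⁻¹
            ≤ ((1 + x) * A) * (1 - x ^ 2)⁻¹ := mul_le_mul_of_nonneg_right b2 hwp.le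
          _ = A * ((1 + x) * (1 - x ^ 2)⁻¹) := by ring
          _ ≤ A * ((1 - x ^ 2) * (1 - x ^ 2)⁻¹) :=
              mul_le_mul_of_nonneg_left
                (mul_le_mul_of_nonneg_right (by nlinarith) hwp.le) hA0
          _ = A := by rw [mul_inv_cancel₀ hw0.ne', mul_one]
      · have b1 := hR x ⟨hx1, hx2⟩
        calc ‖f x‖ ^ 2 * (1 - x ^ 2)⁻¹
            ≤ ((1 - x) * A) * (1 - x ^ 2)⁻¹ := mul_le_mul_of_nonneg_right b1 hwp.le
          _ = A * ((1 - x) * (1 - x ^ 2)⁻¹) := by ring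
          _ ≤ A * ((1 - x ^ 2) * (1 - x ^ 2)⁻¹) :=
              mul_le_mul_of_nonneg_left
                (mul_le_mul_of_nonneg_right (by nlinarith) hwp.le) hA0
          _ = A := by rw [mul_inv_cancel₀ hw0.ne', mul_one]
    have hBle : B ≤ 2 * A := by
      have h1 := setIntegral_mono_on hw
        (integrableOn_const (by simp [Real.volume_Ioo]))
        measurableSet_Ioo hptw
      rw [setIntegral_const, Real.volume_real_Ioo_of_le (by norm_num), smul_eq_mul] at h1
      rw [hB]
      calc (∫ x in Ioo (-1 : ℝ) 1, ‖f x‖ ^ 2 * (1 - x ^ 2)⁻¹) ≤ (1 - (-1)) * A := h1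
        _ = 2 * A := by norm_num
    have hsplit : (∫ x in Ioo (-1 : ℝ) 1, (‖f' x‖ ^ 2 + k * ‖f x‖ ^ 2 * (1 - x ^ 2)⁻¹))
        = A + k * B := by
      have heq : (fun x : ℝ => ‖f' x‖ ^ 2 + k * ‖f x‖ ^ 2 * (1 - x ^ 2)⁻¹)
          = fun x => ‖f' x‖ ^ 2 + k * (‖f x‖ ^ 2 * (1 - x ^ 2)⁻¹) := by
        funext x; ring
      rw [heq, integral_add hsq (hw.const_mul k), integral_const_mul]
    rw [hsplit]
    have hle : A + k * B ≤ (1 + 2 * k) * A := by nlinarith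
    calc Real.sqrt (A + k * B) ≤ Real.sqrt ((1 + 2 * k) * A) := Real.sqrt_le_sqrt hle
      _ = Real.sqrt (1 + 2 * k) * Real.sqrt A := Real.sqrt_mul (by linarith) A
end
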